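/- arXiv:1004.3615 — 9 statements merged into one kernel-verified Lean document; each statement's English description precedes it below -/
import Mathlib

section
/- Let n ≥ 1 and let < be a translation-invariant linear order on the additive group ℚ^n (a bi-ordering). Let H be the set of all x ∈ ℝ^n such that every neighbourhood of x contains both a point of ℚ^n ⊆ ℝ^n that is greater than 0 in the order < and a point of ℚ^n that is less than 0 in the order <. Then H is an ℝ-linear subspace of ℝ^n of dimension n − 1. -/
/-- A bi-ordering of an additive group: a strict total order that is
translation invariant. -/
def IsAddBiOrdering {A : Type*} [AddGroup A] (lt : A → A → Prop) : Prop :=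
  IsStrictTotalOrder A lt ∧ ∀ x y z : A, lt x y → lt (x + z) (y + z)

/-- The coordinatewise inclusion of `ℚ^n` into `ℝ^n`. -/
def ratIncl (n : ℕ) (q : Fin n → ℚ) : Fin n → ℝ := fun i => (q i : ℝ)

section OrderAux

variable {A : Type*} [AddCommGroup A] {lt : A → A → Prop}

lemma bo_neg (hlt : IsAddBiOrdering lt) {q : A} (h : lt q 0) : lt 0 (-q) := by
  have := hlt.2 q 0 (-q) h
  simpa using this

lemma bo_neg' (hlt : IsAddBiOrdering lt) {q : A} (h : lt 0 q) : lt (-q) 0 := by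
  have := hlt.2 0 q (-q) h
  simpa using this

lemma bo_add (hlt : IsAddBiOrdering lt) {a b : A} (ha : lt 0 a) (hb : lt 0 b) :
    lt 0 (a + b) := by
  haveI := hlt.1
  have h1 : lt b (a + b) := by simpa using hlt.2 0 a b ha
  exact _root_.trans_of lt hb h1

lemma bo_sum (hlt : IsAddBiOrdering lt) {ι : Type*} (s : Finset ι) (f : ι → A)
    (hne : s.Nonempty) (h : ∀ i ∈ s, lt 0 (f i)) : lt 0 (∑ i ∈ s, f i) := by
  induction hne using Finset.Nonempty.cons_induction with
  | singleton i => simpa using h i (by simp)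
  | cons i s his hs ih =>
      rw [Finset.sum_cons]
      exact bo_add hlt (h i (by simp)) (ih (fun j hj => h j (by simp [hj])))

lemma bo_nsmul (hlt : IsAddBiOrdering lt) {q : A} {k : ℕ} (hk : k ≠ 0) (h : lt 0 q) :
    lt 0 (k • q) := by
  induction k with
  | zero => exact absurd rfl hk
  | succ m ih =>
      rcases Nat.eq_zero_or_pos m with hm | hm
      · simpa [hm] using h
      · rw [succ_nsmul]
        exact bo_add hlt (ih hm.ne') h

end OrderAux

section OrderRat

variable {n : ℕ} {lt : (Fin n → ℚ) → (Fin n → ℚ) → Prop}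

lemma bo_inv (hlt : IsAddBiOrdering lt) {q : Fin n → ℚ} {k : ℕ} (hk : k ≠ 0)
    (h : lt 0 q) : lt 0 ((k : ℚ)⁻¹ • q) := by
  haveI := hlt.1
  set r : Fin n → ℚ := (k : ℚ)⁻¹ • q with hr
  have hkq : (k : ℚ) ≠ 0 := by exact_mod_cast hk
  have hq : k • r = q := by
    rw [hr, ← Nat.cast_smul_eq_nsmul ℚ, smul_smul, mul_inv_cancel₀ hkq, one_smul]
  rcases trichotomous_of lt 0 r with h0 | h0 | h0
  · exact h0
  · exfalso
    rw [← hq, ← h0, smul_zero] at h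
    exact irrefl_of lt 0 h
  · exfalso
    have h1 : lt 0 (-r) := bo_neg hlt h0
    have h2 : lt 0 (k • (-r)) := bo_nsmul hlt hk h1
    rw [smul_neg, hq] at h2
    have h3 : lt (-q) 0 := bo_neg' hlt h
    exact irrefl_of lt 0 (trans_of lt h2 h3)

lemma bo_rat_smul (hlt : IsAddBiOrdering lt) {q : Fin n → ℚ} {c : ℚ} (hc : 0 < c)
    (h : lt 0 q) : lt 0 (c • q) := by
  have hnum : 0 < c.num := Rat.num_pos.mpr hc
  have hden : (c.den : ℚ) ≠ 0 := by exact_mod_cast c.den_nz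
  have key : c • q = c.num.toNat • ((c.den : ℚ)⁻¹ • q) := by
    rw [← Nat.cast_smul_eq_nsmul ℚ, smul_smul]
    congr 1
    have h1 : ((c.num.toNat : ℤ) : ℚ) = (c.num : ℚ) := by
      rw [Int.toNat_of_nonneg hnum.le]
    have h2 : ((c.num.toNat : ℕ) : ℚ) = (c.num : ℚ) := by push_cast at h1 ⊢; exact h1
    rw [h2]
    conv_lhs => rw [← Rat.num_div_den c]
    rw [div_eq_mul_inv]
  rw [key]
  have htn : c.num.toNat ≠ 0 := by
    simp only [ne_eq, Int.toNat_eq_zero, not_le]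
    exact hnum
  exact bo_nsmul hlt htn (bo_inv hlt c.den_nz h)

end OrderRat

/-- If a rational linear system with ℚ-independent "columns" has a real solution,
the solution is rational. -/
lemma rat_coeffs {ι : Type} [Fintype ι] {N : ℕ} (z : ι → (Fin N → ℚ))
    (hz : LinearIndependent ℚ z) (lam : ι → ℝ) (b : Fin N → ℚ)
    (h : ∀ j, ∑ i, lam i * (z i j : ℝ) = (b j : ℝ)) :
    ∃ d : ι → ℚ, (∀ i, (d i : ℝ) = lam i) ∧ ∀ j, ∑ i, d i * z i j = b j := by
  classical
  have h1 : LinearIndepOn ℚ id ({(1 : ℝ)} : Set ℝ) :=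
    LinearIndepOn.singleton one_ne_zero
  set B := Module.Basis.extend h1 with hB
  have hmem : (1 : ℝ) ∈ h1.extend (Set.subset_univ _) := h1.subset_extend _ rfl
  set i₁ : h1.extend (Set.subset_univ _) := ⟨1, hmem⟩ with hi₁
  set c : ι → (h1.extend (Set.subset_univ _) →₀ ℚ) := fun i => B.repr (lam i) with hc
  have hrepr1 : B.repr 1 = Finsupp.single i₁ 1 := by
    have h2 := B.repr_self i₁
    rwa [show B i₁ = 1 from Module.Basis.extend_apply_self h1 i₁] at h2
  have key : ∀ j, ∑ i, (z i j) • c i = (b j) • Finsupp.single i₁ (1 : ℚ) := by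
    intro j
    have e1 : ∑ i, (z i j) • c i = B.repr (∑ i, lam i * (z i j : ℝ)) := by
      rw [map_sum]
      refine Finset.sum_congr rfl fun i _ => ?_
      rw [mul_comm, ← Rat.smul_def, map_smul]
    rw [e1, h j, ← hrepr1, show ((b j : ℝ)) = (b j) • (1 : ℝ) by rw [Rat.smul_def, mul_one],
      map_smul]
  have keyk : ∀ j k, ∑ i, z i j * c i k = (Finsupp.single i₁ (b j)) k := by
    intro j k
    have h3 := DFunLike.congr_fun (key j) k
    rw [Finsupp.finset_sum_apply] at h3
    simpa [Finsupp.smul_apply] using h3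
  have hzero : ∀ (k), k ≠ i₁ → ∀ i, c i k = 0 := by
    intro k hk
    have hrel : ∑ i, (c i k) • z i = 0 := by
      funext j
      rw [Finset.sum_apply]
      simp only [Pi.smul_apply, smul_eq_mul, Pi.zero_apply]
      have := keyk j k
      rw [Finsupp.single_apply, if_neg (by exact fun hh => hk hh.symm)] at this
      calc ∑ i, c i k * z i j = ∑ i, z i j * c i k := by
            refine Finset.sum_congr rfl fun i _ => mul_comm _ _
        _ = 0 := this
    exact Fintype.linearIndependent_iff.mp hz _ hrel
  refine ⟨fun i => c i i₁, ?_, ?_⟩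
  · intro i
    have hsingle : c i = Finsupp.single i₁ (c i i₁) := by
      ext k
      by_cases hk : k = i₁
      · subst hk; simp
      · rw [hzero k hk i, Finsupp.single_apply, if_neg (fun hh => hk hh.symm)]
    have h4 : Finsupp.linearCombination ℚ ⇑B (c i) = lam i := B.linearCombination_repr (lam i)
    rw [hsingle, Finsupp.linearCombination_single] at h4
    rw [← h4, Module.Basis.extend_apply_self, Rat.smul_def, mul_one]
  · intro j
    have := keyk j i₁
    rw [Finsupp.single_apply, if_pos rfl] at this
    calc ∑ i, c i i₁ * z i j = ∑ i, z i j * c i i₁ := by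
          refine Finset.sum_congr rfl fun i _ => mul_comm _ _
      _ = b j := this

lemma zero_not_mem_convexHull_pos {n : ℕ} {lt : (Fin n → ℚ) → (Fin n → ℚ) → Prop}
    (hlt : IsAddBiOrdering lt) :
    (0 : Fin n → ℝ) ∉ convexHull ℝ (ratIncl n '' {q | lt 0 q}) := by
  classical
  haveI := hlt.1
  intro h0
  obtain ⟨ι, hfin, y, w, hys, hai, hwpos, hwsum, hwcomb⟩ :=
    eq_pos_convex_span_of_mem_convexHull h0
  have hch : ∀ i : ι, ∃ p : Fin n → ℚ, lt 0 p ∧ ratIncl n p = y i := by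
    intro i
    obtain ⟨p, hp1, hp2⟩ := hys ⟨i, rfl⟩
    exact ⟨p, hp1, hp2⟩
  choose q hq hqy using hch
  have hyq : ∀ i j, (q i j : ℝ) = y i j := by
    intro i j
    rw [← hqy i]
    rfl
  set z : ι → (Fin (n + 1) → ℚ) := fun i => Fin.snoc (q i) 1 with hzdef
  have hz : LinearIndependent ℚ z := by
    rw [Fintype.linearIndependent_iff]
    intro g hg
    have hgl : ∑ i, g i = 0 := by
      have h1 := congrFun hg (Fin.last n)
      simpa [hzdef, Finset.sum_apply, Fin.snoc_last] using h1
    have hgc : ∀ j : Fin n, ∑ i, g i * q i j = 0 := by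
      intro j
      have h1 := congrFun hg (Fin.castSucc j)
      simpa [hzdef, Finset.sum_apply, Fin.snoc_castSucc] using h1
    have haiu := affineIndependent_iff.mp hai Finset.univ (fun i => (g i : ℝ)) ?_ ?_
    · intro i
      exact_mod_cast haiu i (Finset.mem_univ i)
    · have : ((∑ i, g i : ℚ) : ℝ) = 0 := by rw [hgl]; norm_num
      push_cast at this
      exact this
    · funext j
      rw [Finset.sum_apply]
      simp only [Pi.smul_apply, smul_eq_mul, Pi.zero_apply]
      have : ((∑ i, g i * q i j : ℚ) : ℝ) = 0 := by rw [hgc j]; norm_num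
      push_cast at this
      calc ∑ i, (g i : ℝ) * y i j = ∑ i, (g i : ℝ) * (q i j : ℝ) := by
            refine Finset.sum_congr rfl fun i _ => by rw [hyq]
        _ = 0 := this
  have hh : ∀ j, ∑ i, w i * ((z i j : ℚ) : ℝ) = ((Fin.snoc (0 : Fin n → ℚ) 1 : Fin (n+1) → ℚ) j : ℝ) := by
    intro j
    induction j using Fin.lastCases with
    | last =>
        simp only [hzdef, Fin.snoc_last]
        push_cast
        simpa using hwsum
    | cast j =>
        simp only [hzdef, Fin.snoc_castSucc, Pi.zero_apply, Rat.cast_zero]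
        have h1 := congrFun hwcomb j
        rw [Finset.sum_apply] at h1
        simp only [Pi.smul_apply, smul_eq_mul, Pi.zero_apply] at h1
        rw [← h1]
        refine Finset.sum_congr rfl fun i _ => by rw [hyq]
  obtain ⟨d, hd1, hd2⟩ := rat_coeffs z hz (fun i => w i) (Fin.snoc 0 1) hh
  have hdpos : ∀ i, 0 < d i := by
    intro i
    have : (0 : ℝ) < (d i : ℝ) := by rw [hd1 i]; exact hwpos i
    exact_mod_cast this
  have hne : Nonempty ι := by
    by_contra hempty
    rw [not_nonempty_iff] at hempty
    rw [Finset.univ_eq_empty, Finset.sum_empty] at hwsum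
    norm_num at hwsum
  have hsum0 : ∑ i, d i • q i = (0 : Fin n → ℚ) := by
    funext j
    rw [Finset.sum_apply]
    simp only [Pi.smul_apply, smul_eq_mul, Pi.zero_apply]
    have h1 := hd2 (Fin.castSucc j)
    simpa [hzdef, Fin.snoc_castSucc] using h1
  have hpos : lt 0 (∑ i, d i • q i) :=
    bo_sum hlt Finset.univ _ Finset.univ_nonempty
      (fun i _ => bo_rat_smul hlt (hdpos i) (hq i))
  rw [hsum0] at hpos
  exact irrefl_of lt 0 hpos

lemma exists_ratIncl_mem {n : ℕ} {W : Set (Fin n → ℝ)} (hW : IsOpen W)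
    (hne : W.Nonempty) : ∃ q : Fin n → ℚ, ratIncl n q ∈ W := by
  obtain ⟨x, hx⟩ := hne
  obtain ⟨ε, hε, hball⟩ := Metric.isOpen_iff.mp hW x hx
  have hh : ∀ i : Fin n, ∃ r : ℚ, x i - ε / 2 < (r : ℝ) ∧ (r : ℝ) < x i + ε / 2 := by
    intro i
    exact exists_rat_btwn (by linarith)
  choose q hq1 hq2 using hh
  refine ⟨q, hball ?_⟩
  rw [Metric.mem_ball, dist_pi_lt_iff hε]
  intro i
  rw [show ratIncl n q i = ((q i : ℚ) : ℝ) from rfl, Real.dist_eq, abs_sub_lt_iff]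
  constructor <;> [linarith [hq1 i, hq2 i]; linarith [hq1 i, hq2 i]]

theorem boundary_set_is_hyperplane
    (n : ℕ) (hn : 0 < n)
    (lt : (Fin n → ℚ) → (Fin n → ℚ) → Prop) (hlt : IsAddBiOrdering lt) :
    ∃ H : Submodule ℝ (Fin n → ℝ),
      (H : Set (Fin n → ℝ)) =
        {x : Fin n → ℝ | ∀ U ∈ nhds x,
          (∃ q : Fin n → ℚ, ratIncl n q ∈ U ∧ lt 0 q) ∧
          (∃ q : Fin n → ℚ, ratIncl n q ∈ U ∧ lt q 0)} ∧
      Module.finrank ℝ H = n - 1 := by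
  classical
  haveI := hlt.1
  set E := Fin n → ℝ
  set P' : Set E := ratIncl n '' {q | lt 0 q} with hP'
  -- P' is nonempty
  have hP'ne : P'.Nonempty := by
    set q1 : Fin n → ℚ := fun _ => 1 with hq1
    have hq1ne : q1 ≠ 0 := by
      intro h
      have := congrFun h ⟨0, hn⟩
      norm_num [hq1] at this
    rcases trichotomous_of lt 0 q1 with h | h | h
    · exact ⟨ratIncl n q1, ⟨q1, h, rfl⟩⟩
    · exact absurd h.symm hq1ne
    · exact ⟨ratIncl n (-q1), ⟨-q1, bo_neg hlt h, rfl⟩⟩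
  -- the closed convex cone generated
  set C : Set E := closure (convexHull ℝ P') with hC
  have hCconv : Convex ℝ C := (convex_convexHull ℝ P').closure
  have hCcl : IsClosed C := isClosed_closure
  -- C is not everything
  have hCne : C ≠ Set.univ := by
    intro hU
    have hconv : Convex ℝ (convexHull ℝ P') := convex_convexHull ℝ P'
    have hspan : affineSpan ℝ (convexHull ℝ P') = ⊤ := by
      have hcl : IsClosed (affineSpan ℝ (convexHull ℝ P') : Set E) :=
        (affineSpan ℝ (convexHull ℝ P')).closed_of_finiteDimensional
      have hsub : C ⊆ (affineSpan ℝ (convexHull ℝ P') : Set E) :=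
        closure_minimal (subset_affineSpan ℝ _) hcl
      rw [hU] at hsub
      rw [← AffineSubspace.coe_eq_univ_iff]
      exact Set.eq_univ_of_univ_subset hsub
    obtain ⟨x, hx⟩ := hconv.interior_nonempty_iff_affineSpan_eq_top.mpr hspan
    have hy : -x ∈ closure (convexHull ℝ P') := by rw [← hC, hU]; trivial
    have h0 : (0 : E) ∈ interior (convexHull ℝ P') := by
      have := hconv.combo_interior_closure_mem_interior hx hy
        (by norm_num : (0:ℝ) < 1/2) (by norm_num : (0:ℝ) ≤ 1/2) (by norm_num)
      simpa [smul_neg] using this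
    exact zero_not_mem_convexHull_pos hlt (interior_subset h0)
  obtain ⟨z, hz⟩ := (Set.ne_univ_iff_exists_notMem C).mp hCne
  obtain ⟨f, u, hfu, huz⟩ := geometric_hahn_banach_closed_point hCconv hCcl hz
  -- basic facts about f
  obtain ⟨a₀, ha₀⟩ := hP'ne
  have ha₀C : a₀ ∈ C := subset_closure (subset_convexHull ℝ P' ha₀)
  have hfa₀ : f a₀ < u := hfu a₀ ha₀C
  set wp : E := z - a₀ with hwp
  have hfwp : 0 < f wp := by
    rw [hwp, map_sub]
    linarith
  -- f is nonpositive on P'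
  have hfP : ∀ p : Fin n → ℚ, lt 0 p → f (ratIncl n p) ≤ 0 := by
    intro p hp
    by_contra hpos
    push_neg at hpos
    obtain ⟨m, hm⟩ := exists_nat_gt (u / f (ratIncl n p))
    have hm1 : u / f (ratIncl n p) < (m + 1 : ℕ) := by
      push_cast
      push_cast at hm
      linarith
    have hval : u < ((m + 1 : ℕ) : ℝ) * f (ratIncl n p) := by
      rw [div_lt_iff₀ hpos] at hm1
      linarith
    have hmem : ratIncl n ((m + 1 : ℕ) • p) ∈ C := by
      refine subset_closure (subset_convexHull ℝ P' ?_)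
      exact ⟨(m + 1 : ℕ) • p, bo_nsmul hlt (Nat.succ_ne_zero m) hp, rfl⟩
    have heq : ratIncl n ((m + 1 : ℕ) • p) = ((m + 1 : ℕ) : ℝ) • ratIncl n p := by
      funext i
      show ((((m + 1 : ℕ) • p) i : ℚ) : ℝ) = ((m + 1 : ℕ) : ℝ) * ((p i : ℚ) : ℝ)
      rw [Pi.smul_apply, nsmul_eq_mul]
      push_cast
      ring
    have := hfu _ hmem
    rw [heq, map_smul, smul_eq_mul] at this
    linarith
  have hfN : ∀ p : Fin n → ℚ, lt p 0 → 0 ≤ f (ratIncl n p) := by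
    intro p hp
    have h1 := hfP (-p) (bo_neg hlt hp)
    have h2 : ratIncl n (-p) = -ratIncl n p := by
      funext i
      show (((-p) i : ℚ) : ℝ) = -((p i : ℚ) : ℝ)
      rw [Pi.neg_apply]
      push_cast
      ring
    rw [h2, map_neg] at h1
    linarith
  -- the subspace
  refine ⟨LinearMap.ker (f : E →ₗ[ℝ] ℝ), ?_, ?_⟩
  · ext x
    simp only [SetLike.mem_coe, LinearMap.mem_ker, ContinuousLinearMap.coe_coe,
      Set.mem_setOf_eq]
    constructor
    · intro hx U hU
      obtain ⟨V, hVU, hVopen, hxV⟩ := mem_nhds_iff.mp hU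
      obtain ⟨ε, hε, hball⟩ := Metric.isOpen_iff.mp hVopen x hxV
      have hmain : ∀ w : E, f w ≠ 0 → ∃ q : Fin n → ℚ,
          ratIncl n q ∈ V ∧ (if f w < 0 then f (ratIncl n q) < 0 else 0 < f (ratIncl n q)) := by
        intro w hw
        set t : ℝ := ε / (‖w‖ + 1) with ht
        have hnorm : (0:ℝ) < ‖w‖ + 1 := by positivity
        have htpos : 0 < t := by positivity
        have hmemball : x + t • w ∈ Metric.ball x ε := by
          rw [Metric.mem_ball, dist_eq_norm, add_sub_cancel_left, norm_smul,
            Real.norm_eq_abs, abs_of_pos htpos]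
          calc t * ‖w‖ < t * (‖w‖ + 1) := by
                exact mul_lt_mul_of_pos_left (lt_add_one _) htpos
            _ = ε := by rw [ht]; field_simp
        set W : Set E := V ∩ (f ⁻¹' (if f w < 0 then Set.Iio 0 else Set.Ioi 0)) with hW
        have hWopen : IsOpen W := by
          refine hVopen.inter ?_
          split_ifs
          · exact isOpen_Iio.preimage f.continuous
          · exact isOpen_Ioi.preimage f.continuous
        have hWne : W.Nonempty := by
          refine ⟨x + t • w, hball hmemball, ?_⟩
          have hfval : f (x + t • w) = t * f w := by
            rw [map_add, map_smul, smul_eq_mul, hx, zero_add]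
          split_ifs with hsign
          · simp only [Set.mem_preimage, Set.mem_Iio, hfval]
            exact mul_neg_of_pos_of_neg htpos hsign
          · simp only [Set.mem_preimage, Set.mem_Ioi, hfval]
            rcases lt_or_gt_of_ne hw with h | h
            · exact absurd h hsign
            · exact mul_pos htpos h
        obtain ⟨q, hq⟩ := exists_ratIncl_mem hWopen hWne
        refine ⟨q, hq.1, ?_⟩
        have := hq.2
        split_ifs with hsign
        · simpa [hW, hsign] using hq.2
        · simpa [hW, hsign] using hq.2
      constructor
      · -- positive points
        have hfan : f (a₀ - z) < 0 := by rw [map_sub]; linarith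
        obtain ⟨q, hqV, hqf⟩ := hmain (a₀ - z) (ne_of_lt hfan)
        rw [if_pos hfan] at hqf
        refine ⟨q, hVU hqV, ?_⟩
        rcases trichotomous_of lt 0 q with h | h | h
        · exact h
        · exfalso
          rw [← h] at hqf
          have : ratIncl n (0 : Fin n → ℚ) = (0 : E) := by
            funext i; show ((0:ℚ):ℝ) = 0; norm_num
          rw [this, map_zero] at hqf
          linarith
        · exact absurd hqf (by have := hfN q h; linarith)
      · -- negative points
        obtain ⟨q, hqV, hqf⟩ := hmain wp hfwp.ne'
        rw [if_neg (by linarith)] at hqf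
        refine ⟨q, hVU hqV, ?_⟩
        rcases trichotomous_of lt 0 q with h | h | h
        · exact absurd hqf (by have := hfP q h; linarith)
        · exfalso
          rw [← h] at hqf
          have : ratIncl n (0 : Fin n → ℚ) = (0 : E) := by
            funext i; show ((0:ℚ):ℝ) = 0; norm_num
          rw [this, map_zero] at hqf
          linarith
        · exact h
    · intro hS
      rcases lt_trichotomy (f x) 0 with h | h | h
      · exfalso
        have hU : f ⁻¹' (Set.Iio 0) ∈ nhds x :=
          (isOpen_Iio.preimage f.continuous).mem_nhds h
        obtain ⟨_, ⟨q, hqU, hq⟩⟩ := hS _ hU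
        have h2 : f (ratIncl n q) < 0 := hqU
        linarith [hfN q hq]
      · exact h
      · exfalso
        have hU : f ⁻¹' (Set.Ioi 0) ∈ nhds x :=
          (isOpen_Ioi.preimage f.continuous).mem_nhds h
        obtain ⟨⟨q, hqU, hq⟩, _⟩ := hS _ hU
        have h2 : 0 < f (ratIncl n q) := hqU
        linarith [hfP q hq]
  · -- finrank
    have hsurj : LinearMap.range (f : E →ₗ[ℝ] ℝ) = ⊤ := by
      rw [LinearMap.range_eq_top]
      intro c
      refine ⟨(c / f wp) • wp, ?_⟩
      show f ((c / f wp) • wp) = c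
      rw [map_smul, smul_eq_mul, div_mul_cancel₀]
      exact hfwp.ne'
    have hrn := LinearMap.finrank_range_add_finrank_ker (f : E →ₗ[ℝ] ℝ)
    rw [hsurj, finrank_top] at hrn
    have h1 : Module.finrank ℝ E = n := by
      rw [Module.finrank_pi]
      simp
    have h2 : Module.finrank ℝ ℝ = 1 := Module.finrank_self ℝ
    rw [h1, h2] at hrn
    exact Nat.eq_sub_of_add_eq' hrn
end

section
/- Let H be a normal subgroup of a group G such that both H and the quotient group G/H are bi-orderable. Then G is bi-orderable if and only if there exists a bi-ordering < of H that is preserved under conjugation by every element of G, i.e. for all g ∈ G and h₁, h₂ ∈ H, h₁ < h₂ implies g⁻¹h₁g < g⁻¹h₂g. -/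
/-- A bi-ordering of a group `G`: a strict total order invariant under
multiplication on both sides. -/
def IsBiOrdering {G : Type*} [Group G] (lt : G → G → Prop) : Prop :=
  IsStrictTotalOrder G lt ∧
    (∀ f g h : G, lt g h → lt (f * g) (f * h)) ∧
    (∀ f g h : G, lt g h → lt (g * f) (h * f))

/-- A group is bi-orderable if it admits a bi-ordering. -/
def BiOrderable (G : Type*) [Group G] : Prop :=
  ∃ lt : G → G → Prop, IsBiOrdering lt

theorem biOrderable_iff_conjugation_invariant_biordering_of_subgroup
    {G : Type*} [Group G] (H : Subgroup G) (hN : H.Normal)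
    (hH : BiOrderable H) (hQ : BiOrderable (G ⧸ H)) :
    BiOrderable G ↔
      ∃ lt : H → H → Prop, IsBiOrdering lt ∧
        ∀ (g : G) (h₁ h₂ : H), lt h₁ h₂ →
          lt ⟨g⁻¹ * ↑h₁ * g, hN.conj_mem' _ h₁.2 g⟩
            ⟨g⁻¹ * ↑h₂ * g, hN.conj_mem' _ h₂.2 g⟩ := by
  constructor
  · rintro ⟨lt, hto, hl, hr⟩
    refine ⟨fun x y => lt ↑x ↑y, ⟨?_, ?_, ?_⟩, ?_⟩
    · exact { trichotomous := fun a b => by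
                suffices hs : lt ↑a ↑b ∨ a = b ∨ lt ↑b ↑a from fun h1 h2 =>
                  hs.elim (fun h => absurd h h1) (fun h => h.elim id (fun h => absurd h h2))
                rcases (haveI := hto; trichotomous (r := lt) (a : G) (b : G)) with h | h | h
                · exact Or.inl h
                · exact Or.inr (Or.inl (Subtype.ext h))
                · exact Or.inr (Or.inr h)
              irrefl := fun a => hto.irrefl _
              trans := fun a b c => hto.trans _ _ _ }
    · exact fun f g h hgh => hl _ _ _ hgh
    · exact fun f g h hgh => hr _ _ _ hgh
    · intro g h₁ h₂ h12
      exact hr g _ _ (hl g⁻¹ _ _ h12)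
  · rintro ⟨ltH, ⟨htoH, hlH, hrH⟩, hconj⟩
    obtain ⟨ltQ, htoQ, hlQ, hrQ⟩ := hQ
    -- positivity facts in H
    have hpos_mul : ∀ x y : H, ltH 1 x → ltH 1 y → ltH 1 (x * y) := fun x y hx hy =>
      htoH.trans _ _ _ hx (by simpa using hlH x 1 y hy)
    set lt' : G → G → Prop := fun a b =>
      ltQ (a : G ⧸ H) (b : G ⧸ H) ∨
        ((a : G ⧸ H) = (b : G ⧸ H) ∧ ∃ h : a⁻¹ * b ∈ H, ltH 1 ⟨a⁻¹ * b, h⟩) with hlt'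
    refine ⟨lt', ⟨{ trichotomous := ?_, irrefl := ?_, trans := ?_ }, ?_, ?_⟩⟩
    · -- trichotomous
      refine fun a b => ?_
      suffices hs : lt' a b ∨ a = b ∨ lt' b a from fun h1 h2 =>
        hs.elim (fun h => absurd h h1) (fun h => h.elim id (fun h => absurd h h2))
      rcases (haveI := htoQ; trichotomous (r := ltQ) (a : G ⧸ H) (b : G ⧸ H)) with h | h | h
      · exact Or.inl (Or.inl h)
      · have hm : a⁻¹ * b ∈ H := (QuotientGroup.eq (s := H)).mp h
        rcases (haveI := htoH; trichotomous (r := ltH) 1 ⟨a⁻¹ * b, hm⟩) with h1 | h1 | h1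
        · exact Or.inl (Or.inr ⟨h, hm, h1⟩)
        · have h0 : a⁻¹ * b = (1 : G) := congrArg Subtype.val h1.symm
          exact Or.inr (Or.inl (inv_mul_eq_one.mp h0))
        · have hm' : b⁻¹ * a ∈ H := by
            have := H.inv_mem hm
            simpa [mul_assoc] using this
          have h1' : ltH 1 ⟨b⁻¹ * a, hm'⟩ := by
            have h2 : ltH 1 (⟨a⁻¹ * b, hm⟩ : H)⁻¹ := by
              simpa using hlH (⟨a⁻¹ * b, hm⟩ : H)⁻¹ _ _ h1
            have heq : (⟨a⁻¹ * b, hm⟩ : H)⁻¹ = ⟨b⁻¹ * a, hm'⟩ := by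
              ext; simp [mul_inv_rev]
            rwa [heq] at h2
          exact Or.inr (Or.inr (Or.inr ⟨h.symm, hm', h1'⟩))
      · exact Or.inr (Or.inr (Or.inl h))
    · -- irrefl
      refine fun a h => ?_
      rcases h with h | ⟨-, hm, h1⟩
      · exact htoQ.irrefl _ h
      · have : (⟨a⁻¹ * a, hm⟩ : H) = 1 := by ext; simp
        exact htoH.irrefl 1 (this ▸ h1)
    · -- trans
      refine fun a b c hab hbc => ?_
      rcases hab with hab | ⟨heab, hmab, hab⟩
      · rcases hbc with hbc | ⟨hebc, -, -⟩
        · exact Or.inl (htoQ.trans _ _ _ hab hbc)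
        · exact Or.inl (hebc ▸ hab)
      · rcases hbc with hbc | ⟨hebc, hmbc, hbc⟩
        · exact Or.inl (heab ▸ hbc)
        · have hmac : a⁻¹ * c ∈ H := by
            have := H.mul_mem hmab hmbc
            simpa [mul_assoc] using this
          refine Or.inr ⟨heab.trans hebc, hmac, ?_⟩
          have := hpos_mul _ _ hab hbc
          have heq : (⟨a⁻¹ * b, hmab⟩ : H) * ⟨b⁻¹ * c, hmbc⟩ = ⟨a⁻¹ * c, hmac⟩ := by
            ext; simp [mul_assoc]
          rwa [heq] at this
    · -- left invariance
      intro f a b hab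
      rcases hab with hab | ⟨heab, hmab, hab⟩
      · left
        have := hlQ ((f : G) : G ⧸ H) _ _ hab
        simpa [QuotientGroup.mk_mul] using this
      · right
        have hm' : (f * a)⁻¹ * (f * b) ∈ H := by
          have : (f * a)⁻¹ * (f * b) = a⁻¹ * b := by group
          rw [this]; exact hmab
        refine ⟨by simpa [QuotientGroup.mk_mul] using congrArg (((f : G) : G ⧸ H) * ·) heab,
          hm', ?_⟩
        have heq : (⟨(f * a)⁻¹ * (f * b), hm'⟩ : H) = ⟨a⁻¹ * b, hmab⟩ := by
          ext; group
        rw [heq]; exact hab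
    · -- right invariance
      intro f a b hab
      rcases hab with hab | ⟨heab, hmab, hab⟩
      · left
        have := hrQ ((f : G) : G ⧸ H) _ _ hab
        simpa [QuotientGroup.mk_mul] using this
      · right
        refine ⟨by simpa [QuotientGroup.mk_mul] using congrArg (· * ((f : G) : G ⧸ H)) heab, ?_, ?_⟩
        · show (a * f)⁻¹ * (b * f) ∈ H
          have : (a * f)⁻¹ * (b * f) = f⁻¹ * (a⁻¹ * b) * f := by group
          rw [this]; exact hN.conj_mem' _ hmab f
        · have := hconj f 1 ⟨a⁻¹ * b, hmab⟩ hab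
          have heq1 : (⟨f⁻¹ * ((1 : H) : G) * f, hN.conj_mem' _ (1 : H).2 f⟩ : H) = 1 := by
            ext; simp
          have heq2 : (⟨f⁻¹ * ((⟨a⁻¹ * b, hmab⟩ : H) : G) * f, hN.conj_mem' _ hmab f⟩ : H)
              = ⟨(a * f)⁻¹ * (b * f), by
                  have : (a * f)⁻¹ * (b * f) = f⁻¹ * (a⁻¹ * b) * f := by group
                  rw [this]; exact hN.conj_mem' _ hmab f⟩ := by
            ext; group
          rw [heq1, heq2] at this
          exact this
end

section
/- Let G be a nontrivial finitely generated group equipped with a bi-ordering <. Then there exists a subgroup C of G which is convex with respect to <, satisfies C ≠ G, and contains every convex subgroup of G other than G itself (so C is the unique maximal proper convex subgroup). Moreover C is a normal subgroup of G, the quotient group G/C is abelian, and every automorphism φ of G that preserves < satisfies φ(C) = C. -/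
/-- A subgroup `C` is convex with respect to an order `lt` on `G` if whenever
`c₁, c₂ ∈ C` and `c₁ < g < c₂`, then `g ∈ C`. -/
def IsConvexSubgroup {G : Type*} [Group G] (lt : G → G → Prop) (C : Subgroup G) : Prop :=
  ∀ c₁ c₂ g : G, c₁ ∈ C → c₂ ∈ C → lt c₁ g → lt g c₂ → g ∈ C

namespace BOP
variable {G : Type*} [Group G] {lt : G → G → Prop}

/-- "a ≤ b" -/
def le' (lt : G → G → Prop) (a b : G) : Prop := ¬ lt b a

section basic
variable (hlt : IsBiOrdering lt)
include hlt

theorem ltt {a b c : G} (h1 : lt a b) (h2 : lt b c) : lt a c := by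
  haveI := hlt.1; exact _root_.trans_of lt h1 h2

theorem ltirr (a : G) : ¬ lt a a := by
  haveI := hlt.1; exact irrefl_of lt a

theorem ltasymm {a b : G} (h : lt a b) : ¬ lt b a :=
  fun h' => ltirr hlt a (ltt hlt h h')

theorem lttri (a b : G) : lt a b ∨ a = b ∨ lt b a := by
  haveI := hlt.1; exact trichotomous_of lt a b

theorem mulL (f : G) {a b : G} (h : lt a b) : lt (f * a) (f * b) := hlt.2.1 f a b h

theorem mulR (f : G) {a b : G} (h : lt a b) : lt (a * f) (b * f) := hlt.2.2 f a b h

theorem invlt {a b : G} (h : lt a b) : lt b⁻¹ a⁻¹ := by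
  have h1 := mulL hlt a⁻¹ (mulR hlt b⁻¹ h)
  simpa using h1

theorem le_iff {a b : G} : le' lt a b ↔ lt a b ∨ a = b := by
  constructor
  · intro h; rcases lttri hlt a b with h1 | h1 | h1
    · exact Or.inl h1
    · exact Or.inr h1
    · exact absurd h1 h
  · rintro (h | rfl)
    · exact ltasymm hlt h
    · exact ltirr hlt a

theorem lerefl (a : G) : le' lt a a := ltirr hlt a

theorem le_of_lt {a b : G} (h : lt a b) : le' lt a b := ltasymm hlt h

theorem letrans {a b c : G} (h1 : le' lt a b) (h2 : le' lt b c) : le' lt a c := by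
  rcases (le_iff hlt).1 h1 with h | rfl
  · rcases (le_iff hlt).1 h2 with h' | rfl
    · exact le_of_lt hlt (ltt hlt h h')
    · exact le_of_lt hlt h
  · exact h2

theorem lt_of_le_of_lt' {a b c : G} (h1 : le' lt a b) (h2 : lt b c) : lt a c := by
  rcases (le_iff hlt).1 h1 with h | rfl
  · exact ltt hlt h h2
  · exact h2

theorem lt_of_lt_of_le' {a b c : G} (h1 : lt a b) (h2 : le' lt b c) : lt a c := by
  rcases (le_iff hlt).1 h2 with h | rfl
  · exact ltt hlt h1 h
  · exact h1

theorem lemulL (f : G) {a b : G} (h : le' lt a b) : le' lt (f * a) (f * b) := by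
  intro h'
  exact h (by simpa using mulL hlt f⁻¹ h')

theorem lemulR (f : G) {a b : G} (h : le' lt a b) : le' lt (a * f) (b * f) := by
  intro h'
  exact h (by simpa using mulR hlt f⁻¹ h')

theorem lemul {a b c d : G} (h1 : le' lt a b) (h2 : le' lt c d) : le' lt (a * c) (b * d) :=
  letrans hlt (lemulR hlt c h1) (lemulL hlt b h2)

theorem leinv {a b : G} (h : le' lt a b) : le' lt b⁻¹ a⁻¹ := by
  rcases (le_iff hlt).1 h with h' | rfl
  · exact le_of_lt hlt (invlt hlt h')
  · exact lerefl hlt _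

theorem conjlt (g : G) {a b : G} (h : lt a b) : lt (g * a * g⁻¹) (g * b * g⁻¹) :=
  mulR hlt g⁻¹ (mulL hlt g h)

/-- nat-power monotone bound: if w ≤ B and w⁻¹ ≤ B then wⁿ ≤ Bⁿ -/
theorem pow_le_pow {w B : G} (h : le' lt w B) : ∀ n : ℕ, le' lt (w ^ n) (B ^ n) := by
  intro n; induction n with
  | zero => simpa using lerefl hlt (1 : G)
  | succ k ih =>
    rw [pow_succ, pow_succ]
    exact lemul hlt ih h

theorem zpow_le_pow {w B : G} (h1 : le' lt w B) (h2 : le' lt w⁻¹ B) (n : ℤ) :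
    le' lt (w ^ n) (B ^ n.natAbs) := by
  rcases Int.natAbs_eq n with he | he
  · rw [he, zpow_natCast]; exact pow_le_pow hlt h1 _
  · rw [he, zpow_neg, zpow_natCast, ← inv_pow, Int.natAbs_neg, Int.natAbs_natCast]
    exact pow_le_pow hlt h2 _

theorem one_le_pow {B : G} (h : le' lt 1 B) (n : ℕ) : le' lt 1 (B ^ n) := by
  have := pow_le_pow hlt h n; simpa using this

theorem pow_mono {B : G} (h : le' lt 1 B) {m n : ℕ} (hmn : m ≤ n) :
    le' lt (B ^ m) (B ^ n) := by
  obtain ⟨k, rfl⟩ := Nat.exists_eq_add_of_le hmn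
  rw [pow_add]
  have := lemulL hlt (B ^ m) (one_le_pow hlt h k)
  simpa using this

end basic

section abs
open Classical in
/-- "absolute value" -/
noncomputable def ab (lt : G → G → Prop) (g : G) : G := if lt 1 g then g else g⁻¹

variable (hlt : IsBiOrdering lt)

theorem ab_eq (g : G) : ab lt g = g ∨ ab lt g = g⁻¹ := by
  by_cases h : lt 1 g <;> simp [ab, h]

include hlt

theorem one_le_ab (g : G) : le' lt 1 (ab lt g) := by
  by_cases h : lt 1 g <;> simp only [ab, h, if_true, if_false]
  · exact le_of_lt hlt h
  · rcases lttri hlt 1 g with h1 | h1 | h1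
    · exact absurd h1 h
    · rw [← h1]; simpa using lerefl hlt (1 : G)
    · exact le_of_lt hlt (by simpa using invlt hlt h1)

theorem le_ab (g : G) : le' lt g (ab lt g) := by
  by_cases h : lt 1 g <;> simp only [ab, h, if_true, if_false]
  · exact lerefl hlt g
  · rcases lttri hlt 1 g with h1 | h1 | h1
    · exact absurd h1 h
    · rw [← h1]; simpa using lerefl hlt (1 : G)
    · exact le_of_lt hlt (ltt hlt h1 (by simpa using invlt hlt h1))

theorem inv_le_ab (g : G) : le' lt g⁻¹ (ab lt g) := by
  by_cases h : lt 1 g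
  · simp only [ab, h, if_true]
    exact le_of_lt hlt (ltt hlt (by simpa using invlt hlt h) h)
  · simp only [ab, h, if_false]
    exact lerefl hlt _

theorem one_lt_ab_of_ne {g : G} (hg : g ≠ 1) : lt 1 (ab lt g) := by
  by_cases h : lt 1 g
  · simpa only [ab, h, if_true] using h
  · simp only [ab, h, if_false]
    rcases lttri hlt 1 g with h1 | h1 | h1
    · exact absurd h1 h
    · exact absurd h1.symm hg
    · simpa using invlt hlt h1

omit hlt in
theorem ab_dom {x k : G} (hx : ∀ n : ℤ, lt (x ^ n) k) (n : ℤ) : lt ((ab lt x) ^ n) k := by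
  rcases ab_eq (lt := lt) x with he | he <;> rw [he]
  · exact hx n
  · rw [inv_zpow, ← zpow_neg]; exact hx (-n)

/-- the key bounding lemma -/
theorem zpow_lt_of_le_sq {w B k : G} (hdom : ∀ n : ℤ, lt (B ^ n) k)
    (h1 : le' lt w (B * B)) (h2 : le' lt w⁻¹ (B * B)) (n : ℤ) : lt (w ^ n) k := by
  have hle := zpow_le_pow hlt h1 h2 n
  have he : (B * B) ^ n.natAbs = B ^ (2 * n.natAbs) := by
    rw [← sq, ← pow_mul]
  rw [he] at hle
  refine lt_of_le_of_lt' hlt hle ?_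
  have := hdom ((2 * n.natAbs : ℕ) : ℤ)
  rwa [zpow_natCast] at this

end abs

section CCdef
variable (lt) (hlt : IsBiOrdering lt) [Nontrivial G]
set_option linter.unusedSectionVars false

include hlt in
/-- The union of all proper convex subgroups. -/
noncomputable def CC : Subgroup G where
  carrier := {x | ∃ k, ∀ n : ℤ, lt (x ^ n) k}
  one_mem' := by
    obtain ⟨g, hg⟩ := exists_ne (1 : G)
    exact ⟨ab lt g, fun n => by simpa using one_lt_ab_of_ne hlt hg⟩
  inv_mem' := by
    rintro x ⟨k, hk⟩
    exact ⟨k, fun n => by rw [inv_zpow, ← zpow_neg]; exact hk (-n)⟩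
  mul_mem' := by
    rintro x y ⟨kx, hkx⟩ ⟨ky, hky⟩
    rcases lttri hlt (ab lt x) (ab lt y) with h | h | h
    · refine ⟨ky, zpow_lt_of_le_sq hlt (ab_dom hky) ?_ ?_⟩
      · exact lemul hlt (letrans hlt (le_ab hlt x) (le_of_lt hlt h)) (le_ab hlt y)
      · rw [mul_inv_rev]
        exact lemul hlt (inv_le_ab hlt y) (letrans hlt (inv_le_ab hlt x) (le_of_lt hlt h))
    · refine ⟨ky, zpow_lt_of_le_sq hlt (ab_dom hky) ?_ ?_⟩
      · exact lemul hlt (letrans hlt (le_ab hlt x) (h ▸ lerefl hlt _)) (le_ab hlt y)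
      · rw [mul_inv_rev]
        exact lemul hlt (inv_le_ab hlt y) (letrans hlt (inv_le_ab hlt x) (h ▸ lerefl hlt _))
    · refine ⟨kx, zpow_lt_of_le_sq hlt (ab_dom hkx) ?_ ?_⟩
      · exact lemul hlt (le_ab hlt x) (letrans hlt (le_ab hlt y) (le_of_lt hlt h))
      · rw [mul_inv_rev]
        exact lemul hlt (letrans hlt (inv_le_ab hlt y) (le_of_lt hlt h)) (inv_le_ab hlt x)

variable {lt}
include hlt

theorem mem_CC {x : G} : x ∈ CC lt hlt ↔ ∃ k, ∀ n : ℤ, lt (x ^ n) k := Iff.rfl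

theorem CC_convex : IsConvexSubgroup lt (CC lt hlt) := by
  rintro c₁ c₂ g h1 h2 hl1 hl2
  obtain ⟨k₁, hk₁⟩ := h1
  obtain ⟨k₂, hk₂⟩ := h2
  have hg' : lt g⁻¹ c₁⁻¹ := invlt hlt hl1
  rcases lttri hlt (ab lt c₁) (ab lt c₂) with h | h | h
  · refine ⟨k₂, zpow_lt_of_le_sq hlt (ab_dom hk₂) ?_ ?_⟩
    · refine letrans hlt (le_of_lt hlt (lt_of_lt_of_le' hlt hl2 (le_ab hlt c₂))) ?_
      simpa using lemulL hlt (ab lt c₂) (one_le_ab hlt c₂)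
    · refine letrans hlt (le_of_lt hlt (lt_of_lt_of_le' hlt hg'
        (letrans hlt (inv_le_ab hlt c₁) (le_of_lt hlt h)))) ?_
      simpa using lemulL hlt (ab lt c₂) (one_le_ab hlt c₂)
  · refine ⟨k₂, zpow_lt_of_le_sq hlt (ab_dom hk₂) ?_ ?_⟩
    · refine letrans hlt (le_of_lt hlt (lt_of_lt_of_le' hlt hl2 (le_ab hlt c₂))) ?_
      simpa using lemulL hlt (ab lt c₂) (one_le_ab hlt c₂)
    · refine letrans hlt (le_of_lt hlt (lt_of_lt_of_le' hlt hg'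
        (letrans hlt (inv_le_ab hlt c₁) ((le_iff hlt).2 (Or.inr h))))) ?_
      simpa using lemulL hlt (ab lt c₂) (one_le_ab hlt c₂)
  · refine ⟨k₁, zpow_lt_of_le_sq hlt (ab_dom hk₁) ?_ ?_⟩
    · refine letrans hlt (le_of_lt hlt (lt_of_lt_of_le' hlt hl2
        (letrans hlt (le_ab hlt c₂) (le_of_lt hlt h)))) ?_
      simpa using lemulL hlt (ab lt c₁) (one_le_ab hlt c₁)
    · refine letrans hlt (le_of_lt hlt (lt_of_lt_of_le' hlt hg' (inv_le_ab hlt c₁))) ?_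
      simpa using lemulL hlt (ab lt c₁) (one_le_ab hlt c₁)

theorem lt_ab_of_not_mem {D : Subgroup G} (hD : IsConvexSubgroup lt D) {e : G}
    (he : e ∉ D) {d : G} (hd : d ∈ D) : lt d (ab lt e) := by
  have habmem : ab lt e ∈ D → e ∈ D := by
    rcases ab_eq (lt := lt) e with h | h <;> rw [h]
    · exact id
    · intro h'; simpa using D.inv_mem h'
  rcases lttri hlt d (ab lt e) with h | h | h
  · exact h
  · exact absurd (habmem (h ▸ hd)) he
  · rcases (le_iff hlt).1 (one_le_ab hlt e) with h1 | h1
    · exact absurd (habmem (hD 1 d (ab lt e) D.one_mem hd h1 h)) he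
    · have : e = 1 := by
        rcases ab_eq (lt := lt) e with h2 | h2
        · rw [h2] at h1; exact h1.symm
        · rw [h2] at h1; simpa using congrArg (·⁻¹) h1.symm
      exact absurd (this ▸ D.one_mem) he

theorem CC_max {D : Subgroup G} (hD : IsConvexSubgroup lt D) (hne : D ≠ ⊤) :
    D ≤ CC lt hlt := by
  have : ∃ e, e ∉ D := by
    by_contra h
    push_neg at h
    exact hne ((Subgroup.eq_top_iff' D).mpr h)
  obtain ⟨e, he⟩ := this
  intro x hx
  exact ⟨ab lt e, fun n => lt_ab_of_not_mem hlt hD he (D.zpow_mem hx n)⟩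

theorem CC_map_le (f : G →* G) (hf : ∀ a b : G, lt a b → lt (f a) (f b)) {x : G}
    (hx : x ∈ CC lt hlt) : f x ∈ CC lt hlt := by
  obtain ⟨k, hk⟩ := hx
  exact ⟨f k, fun n => by rw [← map_zpow]; exact hf _ _ (hk n)⟩

theorem CC_normal : (CC lt hlt).Normal := by
  constructor
  intro n hn g
  have := CC_map_le hlt (MulAut.conj g).toMonoidHom (fun a b hab => conjlt hlt g hab) hn
  simpa using this

theorem CC_map_eq (φ : G ≃* G) (hφ : ∀ g h : G, lt g h → lt (φ g) (φ h)) :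
    (CC lt hlt).map φ.toMonoidHom = CC lt hlt := by
  have hinv : ∀ g h : G, lt g h → lt (φ.symm g) (φ.symm h) := by
    intro g h hgh
    rcases lttri hlt (φ.symm g) (φ.symm h) with h1 | h1 | h1
    · exact h1
    · have he : g = h := by simpa using congrArg φ h1
      exact absurd (he ▸ hgh) (ltirr hlt h)
    · have := hφ _ _ h1
      simp only [MulEquiv.apply_symm_apply] at this
      exact absurd this (ltasymm hlt hgh)
  apply le_antisymm
  · rintro y hy
    obtain ⟨x, hx, rfl⟩ := Subgroup.mem_map.1 hy
    exact CC_map_le hlt φ.toMonoidHom hφ hx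
  · intro x hx
    exact Subgroup.mem_map.2 ⟨φ.symm x, CC_map_le hlt φ.symm.toMonoidHom hinv hx,
      by simp⟩

/-- convex subgroup generated by H (for 1 ≤ H) -/
noncomputable def convPow (H : G) : Subgroup G where
  carrier := {g | ∃ n : ℕ, le' lt g (H ^ n) ∧ le' lt g⁻¹ (H ^ n)}
  one_mem' := ⟨0, by simpa using lerefl hlt (1 : G), by simpa using lerefl hlt (1 : G)⟩
  mul_mem' := by
    rintro x y ⟨n, h1, h1'⟩ ⟨m, h2, h2'⟩
    refine ⟨n + m, ?_, ?_⟩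
    · rw [pow_add]; exact lemul hlt h1 h2
    · rw [mul_inv_rev, Nat.add_comm n m, pow_add]; exact lemul hlt h2' h1'
  inv_mem' := by
    rintro x ⟨n, h1, h2⟩
    exact ⟨n, h2, by simpa using h1⟩

theorem convPow_convex {H : G} (hH : le' lt 1 H) :
    IsConvexSubgroup lt (convPow hlt H) := by
  rintro c₁ c₂ g ⟨n₁, a₁, b₁⟩ ⟨n₂, a₂, b₂⟩ hl1 hl2
  refine ⟨max n₁ n₂, ?_, ?_⟩
  · exact letrans hlt (le_of_lt hlt (lt_of_lt_of_le' hlt hl2 a₂))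
      (pow_mono hlt hH (le_max_right n₁ n₂))
  · exact letrans hlt (le_of_lt hlt (lt_of_lt_of_le' hlt (invlt hlt hl1) b₁))
      (pow_mono hlt hH (le_max_left n₁ n₂))

theorem mem_convPow_self {H : G} (hH : le' lt 1 H) : H ∈ convPow hlt H := by
  refine ⟨1, by simpa using lerefl hlt H, ?_⟩
  rw [pow_one]
  exact letrans hlt (by simpa using leinv hlt hH) hH

theorem CC_ne_top [Group.FG G] : CC lt hlt ≠ ⊤ := by
  intro htop
  obtain ⟨S, hSclos, hSfin⟩ := Group.fg_iff.mp ‹Group.FG G›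
  classical
  have key : ∀ T : Finset G, ∃ H, lt 1 H ∧ ∀ s ∈ T, lt s H ∧ lt s⁻¹ H := by
    intro T
    induction T using Finset.induction_on with
    | empty =>
      obtain ⟨g, hg⟩ := exists_ne (1 : G)
      exact ⟨ab lt g, one_lt_ab_of_ne hlt hg, by simp⟩
    | @insert a T ha ih =>
      obtain ⟨H₀, hH₀, hall⟩ := ih
      have hamem : a ∈ CC lt hlt := htop.symm ▸ Subgroup.mem_top a
      obtain ⟨k, hk⟩ := hamem
      have hk1 : lt 1 k := by simpa using hk 0
      have hka : lt a k := by simpa using hk 1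
      have hka' : lt a⁻¹ k := by simpa using hk (-1)
      rcases lttri hlt H₀ k with h | h | h
      · refine ⟨k, hk1, ?_⟩
        intro s hs
        rcases Finset.mem_insert.1 hs with rfl | hs
        · exact ⟨hka, hka'⟩
        · exact ⟨ltt hlt (hall s hs).1 h, ltt hlt (hall s hs).2 h⟩
      · subst h
        refine ⟨H₀, hH₀, ?_⟩
        intro s hs
        rcases Finset.mem_insert.1 hs with rfl | hs
        · exact ⟨hka, hka'⟩
        · exact hall s hs
      · refine ⟨H₀, hH₀, ?_⟩
        intro s hs
        rcases Finset.mem_insert.1 hs with rfl | hs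
        · exact ⟨ltt hlt hka h, ltt hlt hka' h⟩
        · exact hall s hs
  obtain ⟨H, hH1, hHb⟩ := key hSfin.toFinset
  have hSsub : S ⊆ ↑(convPow hlt H) := by
    intro s hs
    obtain ⟨h1, h2⟩ := hHb s (hSfin.mem_toFinset.mpr hs)
    exact ⟨1, by simpa using le_of_lt hlt h1, by simpa using le_of_lt hlt h2⟩
  have htop' : (⊤ : Subgroup G) ≤ convPow hlt H := by
    rw [← hSclos]
    exact (Subgroup.closure_le _).mpr hSsub
  have hHCC : H ∈ CC lt hlt := htop.symm ▸ Subgroup.mem_top H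
  obtain ⟨k', hk'⟩ := hHCC
  obtain ⟨n, hn, -⟩ := htop' (Subgroup.mem_top k')
  exact hn (by simpa using hk' (n : ℤ))

end CCdef

section Player
variable {lt : G → G → Prop} (hlt : IsBiOrdering lt) [Nontrivial G]
set_option linter.unusedSectionVars false
include hlt

/-- strictly positive modulo `CC` -/
def Pos (x : G) : Prop := lt 1 x ∧ x ∉ CC lt hlt

theorem lt_CC_lt {x : G} (hx : x ∉ CC lt hlt) (h1 : lt 1 x) {u : G}
    (hu : u ∈ CC lt hlt) : lt u x := by
  rcases lttri hlt u x with h | h | h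
  · exact h
  · exact absurd (h ▸ hu) hx
  · exact absurd (CC_convex hlt 1 u x (CC lt hlt).one_mem hu h1 h) hx

theorem Pos.mul' {x y : G} (hx : Pos hlt x) (hy : Pos hlt y) : Pos hlt (x * y) := by
  refine ⟨ltt hlt hx.1 (by simpa using mulL hlt x hy.1), ?_⟩
  intro hm
  have h1 : lt (x * y) x := lt_CC_lt hlt hx.2 hx.1 hm
  have h2 : lt y 1 := by simpa [mul_assoc] using mulL hlt x⁻¹ h1
  exact ltasymm hlt hy.1 h2

theorem pos_trichotomy (x : G) : x ∈ CC lt hlt ∨ Pos hlt x ∨ Pos hlt x⁻¹ := by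
  by_cases hm : x ∈ CC lt hlt
  · exact Or.inl hm
  rcases lttri hlt 1 x with h | h | h
  · exact Or.inr (Or.inl ⟨h, hm⟩)
  · exact absurd (h ▸ (CC lt hlt).one_mem) hm
  · refine Or.inr (Or.inr ⟨by simpa using invlt hlt h, fun hc => hm ?_⟩)
    simpa using (CC lt hlt).inv_mem hc

theorem pos_not_inv {x : G} (hx : Pos hlt x) : ¬ Pos hlt x⁻¹ := by
  intro h
  exact ltasymm hlt hx.1 (by simpa using invlt hlt h.1)

theorem Pos.conj' {x : G} (hx : Pos hlt x) (g : G) : Pos hlt (g * x * g⁻¹) := by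
  refine ⟨by simpa using conjlt hlt g hx.1, ?_⟩
  intro hm
  have : x ∈ CC lt hlt := by
    have := (CC_normal hlt).conj_mem _ hm g⁻¹
    simpa [mul_assoc] using this
  exact hx.2 this

theorem pos_mulC {u v z : G} (hu : u ∈ CC lt hlt) (hv : v ∈ CC lt hlt)
    (hz : Pos hlt z) : Pos hlt (u * z * v) := by
  have huv : u⁻¹ * v⁻¹ ∈ CC lt hlt := mul_mem ((CC lt hlt).inv_mem hu) ((CC lt hlt).inv_mem hv)
  have h1 : lt (u⁻¹ * v⁻¹) z := lt_CC_lt hlt hz.2 hz.1 huv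
  have h2 : lt v⁻¹ (u * z) := by simpa [mul_assoc] using mulL hlt u h1
  refine ⟨by simpa using mulR hlt v h2, ?_⟩
  intro hm
  apply hz.2
  have e : z = u⁻¹ * ((u * z * v) * v⁻¹) := by group
  rw [e]
  exact mul_mem ((CC lt hlt).inv_mem hu) (mul_mem hm ((CC lt hlt).inv_mem hv))

/-- nonnegative modulo CC -/
def Pge0 (z : G) : Prop := z ∈ CC lt hlt ∨ Pos hlt z

theorem pge0_mul {x y : G} (hx : Pge0 hlt x) (hy : Pge0 hlt y) : Pge0 hlt (x * y) := by
  rcases hx with hx | hx <;> rcases hy with hy | hy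
  · exact Or.inl (mul_mem hx hy)
  · exact Or.inr (by simpa using pos_mulC hlt hx (CC lt hlt).one_mem hy)
  · exact Or.inr (by simpa using pos_mulC hlt (CC lt hlt).one_mem hy hx)
  · exact Or.inr (hx.mul' hlt hy)

theorem pos_pge0_mul {x y : G} (hx : Pos hlt x) (hy : Pge0 hlt y) : Pos hlt (x * y) := by
  rcases hy with hy | hy
  · simpa using pos_mulC hlt (CC lt hlt).one_mem hy hx
  · exact hx.mul' hlt hy

theorem pge0_pos_mul {x y : G} (hx : Pge0 hlt x) (hy : Pos hlt y) : Pos hlt (x * y) := by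
  rcases hx with hx | hx
  · simpa using pos_mulC hlt hx (CC lt hlt).one_mem hy
  · exact hx.mul' hlt hy

/-- strict order mod CC -/
def Plt (a b : G) : Prop := Pos hlt (a⁻¹ * b)

/-- weak order mod CC -/
def Ple (a b : G) : Prop := ¬ Plt hlt b a

theorem plt_asymm {a b : G} (h : Plt hlt a b) : Ple hlt a b := by
  intro hc
  apply pos_not_inv hlt h
  have e : (a⁻¹ * b)⁻¹ = b⁻¹ * a := by group
  rw [e]
  exact hc

theorem ple_iff {a b : G} : Ple hlt a b ↔ Pge0 hlt (a⁻¹ * b) := by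
  constructor
  · intro h
    rcases pos_trichotomy hlt (a⁻¹ * b) with hm | hp | hp
    · exact Or.inl hm
    · exact Or.inr hp
    · exact absurd (by simpa [mul_inv_rev, Plt] using hp) h
  · rintro (hm | hp) hc
    · exact hc.2 (by simpa [mul_inv_rev] using (CC lt hlt).inv_mem hm)
    · exact pos_not_inv hlt hp (by simpa [mul_inv_rev, Plt] using hc)

theorem plt_trans' {a b c : G} (h1 : Plt hlt a b) (h2 : Plt hlt b c) : Plt hlt a c := by
  have e : a⁻¹ * c = (a⁻¹ * b) * (b⁻¹ * c) := by group
  unfold Plt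
  rw [e]
  exact h1.mul' hlt h2

theorem plt_ple_trans {a b c : G} (h1 : Plt hlt a b) (h2 : Ple hlt b c) : Plt hlt a c := by
  have e : a⁻¹ * c = (a⁻¹ * b) * (b⁻¹ * c) := by group
  unfold Plt
  rw [e]
  exact pos_pge0_mul hlt h1 ((ple_iff hlt).1 h2)

theorem ple_plt_trans {a b c : G} (h1 : Ple hlt a b) (h2 : Plt hlt b c) : Plt hlt a c := by
  have e : a⁻¹ * c = (a⁻¹ * b) * (b⁻¹ * c) := by group
  unfold Plt
  rw [e]
  exact pge0_pos_mul hlt ((ple_iff hlt).1 h1) h2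

theorem ple_trans' {a b c : G} (h1 : Ple hlt a b) (h2 : Ple hlt b c) : Ple hlt a c := by
  rw [ple_iff hlt] at *
  have e : a⁻¹ * c = (a⁻¹ * b) * (b⁻¹ * c) := by group
  rw [e]
  exact pge0_mul hlt h1 h2

theorem plt_mulL (f : G) {a b : G} (h : Plt hlt a b) : Plt hlt (f * a) (f * b) := by
  have e : (f * a)⁻¹ * (f * b) = a⁻¹ * b := by group
  unfold Plt
  rw [e]
  exact h

theorem plt_mulR (f : G) {a b : G} (h : Plt hlt a b) : Plt hlt (a * f) (b * f) := by
  have e : (a * f)⁻¹ * (b * f) = f⁻¹ * (a⁻¹ * b) * (f⁻¹)⁻¹ := by group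
  unfold Plt
  rw [e]
  exact h.conj' hlt f⁻¹

theorem ple_mulL (f : G) {a b : G} (h : Ple hlt a b) : Ple hlt (f * a) (f * b) := by
  intro hc
  apply h
  have := plt_mulL hlt f⁻¹ hc
  simpa [inv_mul_cancel_left] using this

theorem ple_mulR (f : G) {a b : G} (h : Ple hlt a b) : Ple hlt (a * f) (b * f) := by
  intro hc
  apply h
  have := plt_mulR hlt f⁻¹ hc
  simpa [mul_inv_cancel_right] using this

theorem ple_inv' {a b : G} (h : Ple hlt a b) : Ple hlt b⁻¹ a⁻¹ := by
  intro hc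
  apply h
  have e : (a⁻¹)⁻¹ * b⁻¹ = a * (b⁻¹ * a) * a⁻¹ := by group
  unfold Plt at hc ⊢
  rw [e] at hc
  have : Pos hlt (b⁻¹ * a) := by
    have := hc.conj' hlt a⁻¹
    simpa [mul_assoc] using this
  exact this

theorem pos_mul_nonneg {d z : G} (hd : Pos hlt d) (hz : le' lt 1 z) : Pos hlt (d * z) := by
  refine ⟨lt_of_lt_of_le' hlt hd.1 (by simpa using lemulL hlt d hz), ?_⟩
  intro hm
  have h1 : lt (d * z) d := lt_CC_lt hlt hd.2 hd.1 hm
  have h2 : lt z 1 := by simpa [mul_assoc] using mulL hlt d⁻¹ h1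
  exact hz h2

theorem pos_arch {d : G} (hd : Pos hlt d) (x : G) : ∃ n : ℕ, Plt hlt x (d ^ (n + 1)) := by
  have hd1 : le' lt 1 d := le_of_lt hlt hd.1
  have htop : convPow hlt d = ⊤ := by
    by_contra hne
    exact hd.2 (CC_max hlt (convPow_convex hlt hd1) hne (mem_convPow_self hlt hd1))
  have hx : x ∈ convPow hlt d := htop.symm ▸ Subgroup.mem_top x
  obtain ⟨n, hxn, -⟩ := hx
  refine ⟨n, ?_⟩
  have h1 : le' lt 1 (d ^ n * x⁻¹) := by simpa using lemulR hlt x⁻¹ hxn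
  have h2 : Pos hlt (d * (d ^ n * x⁻¹)) := pos_mul_nonneg hlt hd h1
  have e : x⁻¹ * d ^ (n + 1) = x⁻¹ * (d * (d ^ n * x⁻¹)) * (x⁻¹)⁻¹ := by
    rw [pow_succ']
    group
  unfold Plt
  rw [e]
  exact h2.conj' hlt x⁻¹

theorem no_pos_comm {a b : G} (ha : Pos hlt a) (hb : Pos hlt b)
    (hc : Pos hlt (a⁻¹ * b⁻¹ * a * b)) : False := by
  classical
  set c := a⁻¹ * b⁻¹ * a * b with hcdef
  by_cases hcase : ∃ δ, Pos hlt δ ∧ ¬ Plt hlt c (δ * δ)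
  · obtain ⟨δ, hδ, hle⟩ := hcase
    have hexa := pos_arch hlt hδ a
    have hexb := pos_arch hlt hδ b
    set m := Nat.find hexa with hmdef
    set n := Nat.find hexb with hndef
    have hA : Plt hlt a (δ ^ (m + 1)) := Nat.find_spec hexa
    have hB : Plt hlt b (δ ^ (n + 1)) := Nat.find_spec hexb
    have hA' : Ple hlt (δ ^ m) a := by
      rcases Nat.eq_zero_or_pos m with h0 | hpos
      · rw [h0, pow_zero]
        intro hcon
        exact pos_not_inv hlt ha (by simpa [Plt] using hcon)
      · intro hcon
        have hmin := Nat.find_min hexa (show m - 1 < m from Nat.sub_lt hpos Nat.one_pos)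
        rw [Nat.sub_add_cancel hpos] at hmin
        exact hmin hcon
    have hB' : Ple hlt (δ ^ n) b := by
      rcases Nat.eq_zero_or_pos n with h0 | hpos
      · rw [h0, pow_zero]
        intro hcon
        exact pos_not_inv hlt hb (by simpa [Plt] using hcon)
      · intro hcon
        have hmin := Nat.find_min hexb (show n - 1 < n from Nat.sub_lt hpos Nat.one_pos)
        rw [Nat.sub_add_cancel hpos] at hmin
        exact hmin hcon
    have h1 : Plt hlt (a * b) (δ ^ (m + 1) * δ ^ (n + 1)) :=
      plt_trans' hlt (plt_mulR hlt b hA) (plt_mulL hlt (δ ^ (m + 1)) hB)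
    have h2 : Ple hlt (δ ^ (n + m)) (b * a) := by
      rw [pow_add]
      exact ple_trans' hlt (ple_mulL hlt (δ ^ n) hA') (ple_mulR hlt a hB')
    have e1 : δ ^ (m + 1) * δ ^ (n + 1) = δ ^ (n + m) * (δ * δ) := by
      rw [show δ * δ = δ ^ 2 from (sq δ).symm, ← pow_add, ← pow_add,
        show m + 1 + (n + 1) = n + m + 2 from by omega]
    have ec : c = (b * a)⁻¹ * (a * b) := by rw [hcdef]; group
    have s1 : Plt hlt ((b * a)⁻¹ * (a * b)) ((b * a)⁻¹ * (δ ^ (m + 1) * δ ^ (n + 1))) :=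
      plt_mulL hlt _ h1
    have s2 : Ple hlt ((b * a)⁻¹ * (δ ^ (m + 1) * δ ^ (n + 1)))
        ((δ ^ (n + m))⁻¹ * (δ ^ (m + 1) * δ ^ (n + 1))) :=
      ple_mulR hlt _ (ple_inv' hlt h2)
    have s3 : (δ ^ (n + m))⁻¹ * (δ ^ (m + 1) * δ ^ (n + 1)) = δ * δ := by
      rw [e1, inv_mul_cancel_left]
    apply hle
    rw [ec, ← s3]
    exact plt_ple_trans hlt s1 s2
  · push_neg at hcase
    have least : ∀ t, Pos hlt t → ¬ Plt hlt t c := by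
      intro t ht hlt'
      have hu : Pos hlt (t⁻¹ * c) := hlt'
      have hut : Plt hlt (t⁻¹ * c) t := by
        have h := hcase t ht
        unfold Plt at h ⊢
        have e : (t⁻¹ * c)⁻¹ * t = c⁻¹ * (t * t) := by group
        rw [e]
        exact h
      have huu : Plt hlt ((t⁻¹ * c) * (t⁻¹ * c)) c := by
        have h := plt_mulR hlt (t⁻¹ * c) hut
        have e : t * (t⁻¹ * c) = c := by group
        rwa [e] at h
      have h2 := hcase (t⁻¹ * c) hu
      apply pos_not_inv hlt h2
      unfold Plt at huu
      have e : (c⁻¹ * (t⁻¹ * c * (t⁻¹ * c)))⁻¹ = (t⁻¹ * c * (t⁻¹ * c))⁻¹ * c := by group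
      rw [e]
      exact huu
    have powrep : ∀ x, Pos hlt x → ∃ p : ℕ, x⁻¹ * c ^ p ∈ CC lt hlt := by
      intro x hx
      have hex := pos_arch hlt hc x
      set m := Nat.find hex with hmdef
      have hspec : Plt hlt x (c ^ (m + 1)) := Nat.find_spec hex
      have hA' : Ple hlt (c ^ m) x := by
        rcases Nat.eq_zero_or_pos m with h0 | hpos
        · rw [h0, pow_zero]
          intro hcon
          exact pos_not_inv hlt hx (by simpa [Plt] using hcon)
        · intro hcon
          have hmin := Nat.find_min hex (show m - 1 < m from Nat.sub_lt hpos Nat.one_pos)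
          rw [Nat.sub_add_cancel hpos] at hmin
          exact hmin hcon
      rcases (ple_iff hlt).1 hA' with hm | hp
      · exact ⟨m, by simpa [mul_inv_rev] using (CC lt hlt).inv_mem hm⟩
      · exfalso
        apply least ((c ^ m)⁻¹ * x) hp
        unfold Plt
        have e : ((c ^ m)⁻¹ * x)⁻¹ * c = x⁻¹ * c ^ (m + 1) := by
          rw [pow_succ]; group
        rw [e]
        exact hspec
    obtain ⟨p, hp⟩ := powrep a ha
    obtain ⟨q, hq⟩ := powrep b hb
    haveI hN : (CC lt hlt).Normal := CC_normal hlt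
    have hqa : (a : G ⧸ CC lt hlt) = ((c ^ p : G) : G ⧸ CC lt hlt) :=
      QuotientGroup.eq.mpr hp
    have hqb : (b : G ⧸ CC lt hlt) = ((c ^ q : G) : G ⧸ CC lt hlt) :=
      QuotientGroup.eq.mpr hq
    set X : G ⧸ CC lt hlt := ((c : G) : G ⧸ CC lt hlt) with hXdef
    have hcomm : (X ^ p) * (X ^ q) = (X ^ q) * (X ^ p) :=
      ((Commute.refl X).pow_pow p q).eq
    have hX1 : X = 1 := by
      have e0 : X = ((a⁻¹ * b⁻¹ * a * b : G) : G ⧸ CC lt hlt) := by rw [hXdef, hcdef]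
      have e1 : X = (X ^ p)⁻¹ * (X ^ q)⁻¹ * (X ^ p) * (X ^ q) := by
        conv_lhs => rw [e0, QuotientGroup.mk_mul, QuotientGroup.mk_mul, QuotientGroup.mk_mul,
          QuotientGroup.mk_inv, QuotientGroup.mk_inv, hqa, hqb,
          QuotientGroup.mk_pow, QuotientGroup.mk_pow]
      rw [e1, mul_assoc, mul_assoc, hcomm, inv_mul_cancel_left, inv_mul_cancel]
    exact hc.2 ((QuotientGroup.eq_one_iff c).mp hX1)

theorem comm_mem (a b : G) : a⁻¹ * b⁻¹ * a * b ∈ CC lt hlt := by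
  haveI hN : (CC lt hlt).Normal := CC_normal hlt
  have key : ∀ x y : G, Pos hlt x → Pos hlt y → x⁻¹ * y⁻¹ * x * y ∈ CC lt hlt := by
    intro x y hx hy
    rcases pos_trichotomy hlt (x⁻¹ * y⁻¹ * x * y) with hm | hp | hp
    · exact hm
    · exact absurd hp (fun h => no_pos_comm hlt hx hy h)
    · exfalso
      apply no_pos_comm hlt hy hx
      have e : (x⁻¹ * y⁻¹ * x * y)⁻¹ = y⁻¹ * x⁻¹ * y * x := by group
      rw [e] at hp
      exact hp
  by_cases hma : a ∈ CC lt hlt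
  · have e : a⁻¹ * b⁻¹ * a * b = a⁻¹ * (b⁻¹ * a * (b⁻¹)⁻¹) := by group
    rw [e]
    exact mul_mem ((CC lt hlt).inv_mem hma) (hN.conj_mem a hma b⁻¹)
  by_cases hmb : b ∈ CC lt hlt
  · have e : a⁻¹ * b⁻¹ * a * b = (a⁻¹ * b⁻¹ * (a⁻¹)⁻¹) * b := by group
    rw [e]
    exact mul_mem (hN.conj_mem b⁻¹ ((CC lt hlt).inv_mem hmb) a⁻¹) hmb
  have hA : Pos hlt a ∨ Pos hlt a⁻¹ := by
    rcases pos_trichotomy hlt a with h | h | h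
    · exact absurd h hma
    · exact Or.inl h
    · exact Or.inr h
  have hB : Pos hlt b ∨ Pos hlt b⁻¹ := by
    rcases pos_trichotomy hlt b with h | h | h
    · exact absurd h hmb
    · exact Or.inl h
    · exact Or.inr h
  rcases hA with hpa | hpa <;> rcases hB with hpb | hpb
  · exact key a b hpa hpb
  · have hz := key a b⁻¹ hpa hpb
    have e : a⁻¹ * b⁻¹ * a * b = b⁻¹ * (a⁻¹ * (b⁻¹)⁻¹ * a * b⁻¹)⁻¹ * (b⁻¹)⁻¹ := by group
    rw [e]
    exact hN.conj_mem _ ((CC lt hlt).inv_mem hz) b⁻¹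
  · have hz := key a⁻¹ b hpa hpb
    have e : a⁻¹ * b⁻¹ * a * b = a⁻¹ * ((a⁻¹)⁻¹ * b⁻¹ * a⁻¹ * b)⁻¹ * (a⁻¹)⁻¹ := by group
    rw [e]
    exact hN.conj_mem _ ((CC lt hlt).inv_mem hz) a⁻¹
  · have hz := key a⁻¹ b⁻¹ hpa hpb
    have e : a⁻¹ * b⁻¹ * a * b
        = (a⁻¹ * b⁻¹) * ((a⁻¹)⁻¹ * (b⁻¹)⁻¹ * a⁻¹ * b⁻¹) * (a⁻¹ * b⁻¹)⁻¹ := by group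
    rw [e]
    exact hN.conj_mem _ hz (a⁻¹ * b⁻¹)

end Player
end BOP

theorem exists_maximal_proper_convex_subgroup
    {G : Type*} [Group G] [Nontrivial G] [Group.FG G]
    (lt : G → G → Prop) (hlt : IsBiOrdering lt) :
    ∃ C : Subgroup G,
      IsConvexSubgroup lt C ∧ C ≠ ⊤ ∧
      (∀ D : Subgroup G, IsConvexSubgroup lt D → D ≠ ⊤ → D ≤ C) ∧
      ∃ hN : C.Normal,
        (∀ x y : G ⧸ C, x * y = y * x) ∧
        (∀ φ : G ≃* G, (∀ g h : G, lt g h → lt (φ g) (φ h)) →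
          C.map φ.toMonoidHom = C) := by
  refine ⟨BOP.CC lt hlt, BOP.CC_convex hlt, BOP.CC_ne_top hlt, fun D hD hne => BOP.CC_max hlt hD hne,
    BOP.CC_normal hlt, ?_, fun φ hφ => BOP.CC_map_eq hlt φ hφ⟩
  haveI : (BOP.CC lt hlt).Normal := BOP.CC_normal hlt
  intro x y
  refine QuotientGroup.induction_on x (fun g => ?_)
  refine QuotientGroup.induction_on y (fun h => ?_)
  rw [← QuotientGroup.mk_mul, ← QuotientGroup.mk_mul]
  apply QuotientGroup.eq.mpr
  have e : (g * h)⁻¹ * (h * g) = h⁻¹ * g⁻¹ * h * g := by group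
  rw [e]
  exact BOP.comm_mem hlt h g
end

section
/- Let A be an additive abelian group equipped with a bi-ordering < (a translation-invariant linear order). Then there exists a translation-invariant linear order ≺ on the ℚ-vector space A ⊗_ℤ ℚ such that: (1) the canonical map A → A ⊗_ℤ ℚ, a ↦ a ⊗ 1, is strictly order-preserving from < to ≺; and (2) for every automorphism φ of A that preserves <, the induced map φ ⊗ id : A ⊗_ℤ ℚ → A ⊗_ℤ ℚ preserves ≺. -/
open scoped TensorProduct

theorem biordering_extends_to_rational_tensor
    {A : Type*} [AddCommGroup A]
    (lt : A → A → Prop) (hlt : IsAddBiOrdering lt) :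
    ∃ lt' : (A ⊗[ℤ] ℚ) → (A ⊗[ℤ] ℚ) → Prop,
      IsAddBiOrdering lt' ∧
      (∀ a b : A, lt a b → lt' (a ⊗ₜ[ℤ] (1 : ℚ)) (b ⊗ₜ[ℤ] (1 : ℚ))) ∧
      (∀ φ : A ≃+ A, (∀ a b : A, lt a b → lt (φ a) (φ b)) →
        ∀ x y : A ⊗[ℤ] ℚ, lt' x y →
          lt' (LinearMap.rTensor ℚ φ.toAddMonoidHom.toIntLinearMap x)
              (LinearMap.rTensor ℚ φ.toAddMonoidHom.toIntLinearMap y)) := by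
  classical
  haveI := hlt.1
  have hadd := hlt.2
  -- basic order facts
  have hsub : ∀ x y : A, lt x y → lt 0 (y - x) := fun x y h => by
    have := hadd x y (-x) h; simpa [sub_eq_add_neg] using this
  have hsub' : ∀ x y : A, lt 0 (y - x) → lt x y := fun x y h => by
    have := hadd 0 (y - x) x h; simpa [sub_add_cancel] using this
  have hpos_add : ∀ p q : A, lt 0 p → lt 0 q → lt 0 (p + q) := fun p q hp hq => by
    have h1 : lt q (p + q) := by
      have := hadd 0 p q hp; simpa [add_comm] using this
    exact _root_.trans_of lt hq h1
  have hpos_smul : ∀ a : A, lt 0 a → ∀ n : ℕ, 0 < n → lt 0 (n • a) := by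
    intro a ha n hn
    induction n with
    | zero => exact absurd hn (lt_irrefl 0)
    | succ k ih =>
      rcases Nat.eq_zero_or_pos k with hk | hk
      · subst hk; simpa using ha
      · rw [succ_nsmul]
        exact hpos_add _ _ (ih hk) ha
  have hneg : ∀ a : A, lt a 0 → lt 0 (-a) := fun a h => by
    have := hadd a 0 (-a) h; simpa using this
  -- torsion-freeness
  have htf : ∀ (n : ℕ) (a : A), 0 < n → n • a = 0 → a = 0 := by
    intro n a hn h
    rcases trichotomous_of lt a 0 with h1 | h1 | h1
    · exfalso
      have h2 : lt 0 (n • (-a)) := hpos_smul _ (hneg a h1) n hn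
      rw [smul_neg, h, neg_zero] at h2
      exact irrefl_of lt 0 h2
    · exact h1
    · exfalso
      have h2 : lt 0 (n • a) := hpos_smul _ h1 n hn
      rw [h] at h2
      exact irrefl_of lt 0 h2
  have htfz : ∀ (c : ℤ) (a : A), c ≠ 0 → c • a = 0 → a = 0 := by
    intro c a hc h
    have hpos : 0 < c.natAbs := Int.natAbs_pos.mpr hc
    refine htf c.natAbs a hpos ?_
    rcases Int.natAbs_eq c with h1 | h1
    · rw [← natCast_zsmul, ← h1, h]
    · rw [← natCast_zsmul, ← neg_neg ((c.natAbs : ℤ)), ← h1, neg_smul, h, neg_zero]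
  -- the localized module structure on A ⊗ ℚ
  set S := nonZeroDivisors ℤ with hS
  set f0 : A →ₗ[ℤ] ℚ ⊗[ℤ] A := TensorProduct.mk ℤ ℚ A 1 with hf0
  haveI : IsLocalizedModule S f0 :=
    (isLocalizedModule_iff_isBaseChange S ℚ f0).mpr (TensorProduct.isBaseChange ℤ A ℚ)
  set e : (ℚ ⊗[ℤ] A) ≃ₗ[ℤ] (A ⊗[ℤ] ℚ) := TensorProduct.comm ℤ ℚ A with he
  set f : A →ₗ[ℤ] A ⊗[ℤ] ℚ := e.toLinearMap ∘ₗ f0 with hfdef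
  haveI hloc : IsLocalizedModule S f := IsLocalizedModule.of_linearEquiv S f0 e
  have hf : ∀ a : A, f a = a ⊗ₜ[ℤ] (1 : ℚ) := fun a => rfl
  -- definition of positivity
  set pos : (A ⊗[ℤ] ℚ) → Prop :=
    fun x => ∃ n : ℕ, 0 < n ∧ ∃ a : A, lt 0 a ∧ n • x = f a with hposdef
  -- pos 0 is false
  have hpos0 : ¬ pos 0 := by
    rintro ⟨n, hn, a, ha, hna⟩
    rw [smul_zero] at hna
    have : f a = f 0 := by rw [map_zero, ← hna]
    obtain ⟨c, hc⟩ := IsLocalizedModule.exists_of_eq (S := S) (f := f) this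
    rw [smul_zero] at hc
    have : a = 0 := htfz c.1 a (nonZeroDivisors.coe_ne_zero c) hc
    rw [this] at ha
    exact irrefl_of lt 0 ha
  -- pos is closed under addition
  have hpos_add' : ∀ x y, pos x → pos y → pos (x + y) := by
    rintro x y ⟨n, hn, a, ha, hna⟩ ⟨m, hm, b, hb, hmb⟩
    refine ⟨n * m, Nat.mul_pos hn hm, m • a + n • b,
      hpos_add _ _ (hpos_smul a ha m hm) (hpos_smul b hb n hn), ?_⟩
    calc (n * m) • (x + y) = m • (n • x) + n • (m • y) := by
          rw [smul_add, ← mul_smul, ← mul_smul, mul_comm m n]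
      _ = f (m • a + n • b) := by rw [hna, hmb, map_add, map_nsmul, map_nsmul]
  -- division in the vector space
  have hdiv : ∀ (n : ℕ) (x : A ⊗[ℤ] ℚ), 0 < n → n • x = 0 → x = 0 := by
    intro n x hn h
    have h1 : n • (e.symm x) = 0 := by
      rw [← map_nsmul, h, map_zero]
    have h2 : (n : ℚ) • (e.symm x) = 0 := by rw [Nat.cast_smul_eq_nsmul, h1]
    have hne : (n : ℚ) ≠ 0 := Nat.cast_ne_zero.mpr hn.ne'
    have h3 : e.symm x = 0 := by
      have := congrArg (fun z => ((n : ℚ)⁻¹) • z) h2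
      simpa [smul_smul, inv_mul_cancel₀ hne] using this
    have := congrArg e h3
    simpa using this
  -- trichotomy for pos
  have hkey : ∀ x : A ⊗[ℤ] ℚ, x = 0 ∨ pos x ∨ pos (-x) := by
    intro x
    obtain ⟨⟨a, s⟩, hs⟩ := IsLocalizedModule.surj S f x
    dsimp only at hs
    rw [Submonoid.smul_def] at hs
    have hs0 : (s : ℤ) ≠ 0 := nonZeroDivisors.coe_ne_zero s
    have hnat : ∀ b : A, (s : ℤ) • x = f b →
        ∃ n : ℕ, 0 < n ∧ (n • x = f b ∨ n • (-x) = f b) := by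
      intro b hy
      refine ⟨(s : ℤ).natAbs, Int.natAbs_pos.mpr hs0, ?_⟩
      rcases Int.natAbs_eq (s : ℤ) with h1 | h1
      · left; rw [← natCast_zsmul, ← h1, hy]
      · right
        rw [← natCast_zsmul, smul_neg, ← neg_smul, ← neg_neg (((s : ℤ).natAbs : ℤ)),
          ← h1, neg_neg, hy]
    rcases trichotomous_of lt a 0 with h1 | h1 | h1
    · -- a < 0, use -a
      obtain ⟨n, hn, hcase⟩ := hnat a hs
      right
      rcases hcase with h2 | h2
      · right
        refine ⟨n, hn, -a, hneg a h1, ?_⟩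
        rw [smul_neg, h2, ← map_neg]
      · left
        refine ⟨n, hn, -a, hneg a h1, ?_⟩
        rw [map_neg, ← h2, smul_neg, neg_neg]
    · -- a = 0
      left
      subst h1
      rw [map_zero] at hs
      refine hdiv (s : ℤ).natAbs x (Int.natAbs_pos.mpr hs0) ?_
      rcases Int.natAbs_eq (s : ℤ) with h1 | h1
      · rw [← natCast_zsmul, ← h1, hs]
      · rw [← natCast_zsmul, ← neg_neg (((s : ℤ).natAbs : ℤ)), ← h1, neg_smul, hs, neg_zero]
    · -- 0 < a
      right
      obtain ⟨n, hn, hcase⟩ := hnat a hs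
      rcases hcase with h2 | h2
      · exact Or.inl ⟨n, hn, a, h1, h2⟩
      · exact Or.inr ⟨n, hn, a, h1, h2⟩
  -- the order
  refine ⟨fun x y => pos (y - x), ⟨?_, ?_⟩, ?_, ?_⟩
  · -- strict total order
    refine { trichotomous := ?_, irrefl := ?_, trans := ?_ }
    · intro x y
      rcases hkey (y - x) with h | h | h
      · exact fun _ _ => (sub_eq_zero.mp h).symm
      · exact fun h' _ => absurd h h'
      · rw [neg_sub] at h; exact fun _ h' => absurd h h'
    · intro x h
      rw [sub_self] at h
      exact hpos0 h
    · intro x y z h1 h2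
      have := hpos_add' _ _ h2 h1
      rwa [sub_add_sub_cancel] at this
  · -- translation invariance
    intro x y z h
    simpa [add_sub_add_right_eq_sub] using h
  · -- embedding
    intro a b hab
    show pos _
    refine ⟨1, one_pos, b - a, hsub a b hab, ?_⟩
    rw [one_smul, map_sub, hf, hf]
  · -- automorphisms
    intro φ hφ x y h
    obtain ⟨n, hn, a, ha, hna⟩ := h
    set F := LinearMap.rTensor ℚ φ.toAddMonoidHom.toIntLinearMap with hF
    refine ⟨n, hn, φ a, ?_, ?_⟩
    · have := hφ 0 a ha
      rwa [map_zero] at this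
    · have h2 : F (n • (y - x)) = F (f a) := by rw [hna]
      rw [map_nsmul, map_sub] at h2
      rw [h2, hf]
      simp [hF, LinearMap.rTensor_tmul, hf]
end

section
/- (Hölder's theorem) Let G be a group equipped with an Archimedean bi-ordering <. Then there exists an injective group homomorphism f from G into the additive group of real numbers which is strictly order-preserving (g < h implies f(g) < f(h) in ℝ). In particular, G is abelian. -/
/-- A bi-ordering is Archimedean if for every `g ≠ 1` and every `h` there is an
integer `n` with `g^(-n) < h < g^n`. -/
def IsArchimedeanOrdering {G : Type*} [Group G] (lt : G → G → Prop) : Prop :=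
  ∀ g h : G, g ≠ 1 → ∃ n : ℤ, lt (g ^ (-n)) h ∧ lt h (g ^ n)

section HolderAux

/-- A real-limit helper: if `(n+1)*c ≤ (n+1)*d + K` for every `n`, then `c ≤ d`. -/
theorem holder_lim (K c d : ℝ) (h : ∀ n : ℕ, ((n : ℝ) + 1) * c ≤ ((n : ℝ) + 1) * d + K) :
    c ≤ d := by
  by_contra hc
  push_neg at hc
  obtain ⟨n, hn⟩ := exists_nat_gt (K / (c - d))
  have hcd : (0 : ℝ) < c - d := by linarith
  have hK : K < ((n : ℝ) + 1) * (c - d) := by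
    have h1 : K / (c - d) < (n : ℝ) + 1 := by linarith
    calc K = (K / (c - d)) * (c - d) := by field_simp
    _ < ((n : ℝ) + 1) * (c - d) := by
        exact mul_lt_mul_of_pos_right h1 hcd
  have h2 := h n
  nlinarith

theorem holder_core {G : Type*} [Group G] [LinearOrder G]
    [CovariantClass G G (· * ·) (· < ·)]
    [CovariantClass G G (Function.swap (· * ·)) (· < ·)]
    (arch : ∀ g h : G, g ≠ 1 → ∃ n : ℤ, g ^ (-n) < h ∧ h < g ^ n) :
    ∃ f : G → ℝ, Function.Injective f ∧
      (∀ g h : G, f (g * h) = f g + f h) ∧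
      (∀ g h : G, g < h → f g < f h) := by
  haveI : CovariantClass G G (· * ·) (· ≤ ·) := covariantClass_le_of_lt _ _ _
  haveI : CovariantClass G G (Function.swap (· * ·)) (· ≤ ·) := covariantClass_le_of_lt _ _ _
  by_cases htriv : ∀ g : G, g = 1
  · refine ⟨0, fun g h _ => (htriv g).trans (htriv h).symm, by simp, fun g h hgh => ?_⟩
    rw [htriv g, htriv h] at hgh
    exact absurd hgh (lt_irrefl 1)
  -- pick a positive element `a`
  push_neg at htriv
  obtain ⟨g₀, hg₀⟩ := htriv
  have hex : ∃ a : G, 1 < a := by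
    rcases lt_trichotomy g₀ 1 with h | h | h
    · refine ⟨g₀⁻¹, ?_⟩
      have := mul_lt_mul_right h g₀⁻¹
      simpa using this
    · exact absurd h hg₀
    · exact ⟨g₀, h⟩
  obtain ⟨a, ha⟩ := hex
  have ha1 : a ≠ 1 := ha.ne'
  -- strict monotonicity of integer powers of `a`
  have S : StrictMono (fun n : ℤ => a ^ n) := by
    intro m n hmn
    have e : m + (n - m) = n := by ring
    have hpos : 1 < a ^ (n - m) := by
      have hnm : (0:ℤ) < n - m := by omega
      lift n - m to ℕ using hnm.le with k hk
      rw [zpow_natCast]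
      exact one_lt_pow' ha (by exact_mod_cast hnm.ne')
    calc a ^ m = a ^ m * 1 := by rw [mul_one]
    _ < a ^ m * a ^ (n - m) := mul_lt_mul_right hpos _
    _ = a ^ n := by rw [← zpow_add, e]
  -- base-`a` integer logarithm
  have exq : ∀ x : G, ∃ p : ℤ, a ^ p ≤ x ∧ x < a ^ (p + 1) := by
    intro x
    obtain ⟨n, hn1, hn2⟩ := arch a x ha1
    obtain ⟨p, hp, hmax⟩ := Int.exists_greatest_of_bdd
      (P := fun z : ℤ => a ^ z ≤ x)
      ⟨n, fun z hz => (S.lt_iff_lt.mp (lt_of_le_of_lt hz hn2)).le⟩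
      ⟨-n, hn1.le⟩
    refine ⟨p, hp, ?_⟩
    by_contra hcon
    push_neg at hcon
    have := hmax _ hcon
    omega
  choose q hq1 hq2 using exq
  have le_q : ∀ (m : ℤ) (x : G), a ^ m ≤ x → m ≤ q x := by
    intro m x h
    have := S.lt_iff_lt.mp (lt_of_le_of_lt h (hq2 x))
    omega
  have qsup : ∀ x y : G, q x + q y ≤ q (x * y) := by
    intro x y
    apply le_q
    rw [zpow_add]
    calc a ^ q x * a ^ q y ≤ x * a ^ q y := mul_le_mul_left (hq1 x) _
    _ ≤ x * y := mul_le_mul_right (hq1 y) _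
  have qsub : ∀ x y : G, q (x * y) ≤ q x + q y + 1 := by
    intro x y
    have h2 : x * y < a ^ (q x + 1) * a ^ (q y + 1) := by
      calc x * y < a ^ (q x + 1) * y := mul_lt_mul_left (hq2 x) y
      _ < a ^ (q x + 1) * a ^ (q y + 1) := mul_lt_mul_right (hq2 y) _
    rw [← zpow_add] at h2
    have := S.lt_iff_lt.mp (lt_of_le_of_lt (hq1 (x * y)) h2)
    omega
  have qmono : ∀ x y : G, x ≤ y → q x ≤ q y := fun x y h => le_q _ _ ((hq1 x).trans h)
  have q1 : q 1 = 0 := by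
    have h0 : (0 : ℤ) ≤ q 1 := le_q 0 1 (by simp)
    have h1 : a ^ q 1 ≤ 1 := hq1 1
    have h2 : (1 : G) < a ^ (1 : ℤ) := by simpa using ha
    have := S.lt_iff_lt.mp (lt_of_le_of_lt h1 h2)
    omega
  -- iterated bounds
  have qpow_ge : ∀ (x : G) (n : ℕ), (n : ℤ) * q x ≤ q (x ^ n) := by
    intro x n
    induction n with
    | zero => simp [q1]
    | succ k ih =>
      have h1 := qsup (x ^ k) x
      rw [← pow_succ] at h1
      push_cast
      linarith
  have qpow_le : ∀ (x : G) (n : ℕ), q (x ^ (n + 1)) ≤ ((n : ℤ) + 1) * q x + (n : ℤ) := by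
    intro x n
    induction n with
    | zero => simp
    | succ k ih =>
      have h1 := qsub (x ^ (k + 1)) x
      rw [← pow_succ] at h1
      push_cast
      push_cast at ih
      linarith
  -- the homogenized function φ
  set φ : G → ℝ := fun x => ⨆ n : ℕ, (q (x ^ (n + 1)) : ℝ) / ((n : ℝ) + 1) with hφ
  have hbdd : ∀ x : G, BddAbove (Set.range fun n : ℕ => (q (x ^ (n + 1)) : ℝ) / ((n : ℝ) + 1)) := by
    intro x
    refine ⟨(q x : ℝ) + 1, ?_⟩
    rintro _ ⟨n, rfl⟩
    have h := qpow_le x n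
    have hpos : (0 : ℝ) < (n : ℝ) + 1 := by positivity
    rw [div_le_iff₀ hpos]
    have h' : (q (x ^ (n + 1)) : ℝ) ≤ ((n : ℝ) + 1) * (q x : ℝ) + (n : ℝ) := by exact_mod_cast h
    nlinarith
  have F1 : ∀ (x : G) (n : ℕ), (q (x ^ (n + 1)) : ℝ) / ((n : ℝ) + 1) ≤ φ x := by
    intro x n
    exact le_ciSup (hbdd x) n
  have F2 : ∀ (x : G) (n : ℕ), φ x ≤ ((q (x ^ (n + 1)) : ℝ) + 1) / ((n : ℝ) + 1) := by
    intro x n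
    apply ciSup_le
    intro m
    have hm : (0 : ℝ) < (m : ℝ) + 1 := by positivity
    have hn : (0 : ℝ) < (n : ℝ) + 1 := by positivity
    rw [div_le_div_iff₀ hm hn]
    -- (n+1) * q (x^(m+1)) ≤ (m+1) * (q (x^(n+1)) + 1)
    have key : ((n : ℤ) + 1) * q (x ^ (m + 1)) ≤ ((m : ℤ) + 1) * q (x ^ (n + 1)) + (m : ℤ) + 1 := by
      have h1 : ((n : ℤ) + 1) * q (x ^ (m + 1)) ≤ q ((x ^ (m + 1)) ^ (n + 1)) := by
        have := qpow_ge (x ^ (m + 1)) (n + 1)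
        push_cast at this ⊢
        omega
      have h2 : q ((x ^ (n + 1)) ^ (m + 1)) ≤ ((m : ℤ) + 1) * q (x ^ (n + 1)) + (m : ℤ) := by
        have := qpow_le (x ^ (n + 1)) m
        omega
      rw [← pow_mul, Nat.mul_comm, pow_mul] at h1
      omega
    have keyR : ((n : ℝ) + 1) * (q (x ^ (m + 1)) : ℝ) ≤
        ((m : ℝ) + 1) * (q (x ^ (n + 1)) : ℝ) + (m : ℝ) + 1 := by exact_mod_cast key
    nlinarith
  have K_le : ∀ (x : G) (n : ℕ), (q (x ^ (n + 1)) : ℝ) ≤ ((n : ℝ) + 1) * φ x := by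
    intro x n
    have h := F1 x n
    have hn : (0 : ℝ) < (n : ℝ) + 1 := by positivity
    rw [div_le_iff₀ hn] at h
    nlinarith
  have K_ge : ∀ (x : G) (n : ℕ), ((n : ℝ) + 1) * φ x - 1 ≤ (q (x ^ (n + 1)) : ℝ) := by
    intro x n
    have h := F2 x n
    have hn : (0 : ℝ) < (n : ℝ) + 1 := by positivity
    rw [le_div_iff₀ hn] at h
    nlinarith
  -- monoid identities / inequalities
  have comm_pow : ∀ (x y : G) (n : ℕ), (x * y) ^ (n + 1) = x * (y * x) ^ n * y := by
    intro x y n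
    induction n with
    | zero => simp [mul_assoc]
    | succ k ih =>
      rw [pow_succ, ih, pow_succ]
      simp [mul_assoc]
  have E1 : ∀ x y : G, x * y ≤ y * x → ∀ n : ℕ, (x * y) ^ n ≤ (y * x) ^ n := by
    intro x y h n
    exact pow_le_pow_left' h n
  have E2 : ∀ x y : G, x * y ≤ y * x → ∀ n : ℕ, x ^ (n + 1) * y ^ (n + 1) ≤ (x * y) ^ (n + 1) := by
    intro x y h n
    induction n with
    | zero => simp
    | succ k ih =>
      have step1 : x ^ (k + 2) * y ^ (k + 2) = x * (x ^ (k + 1) * y ^ (k + 1)) * y := by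
        rw [pow_succ' x, pow_succ y]
        simp [mul_assoc]
      have step2 : x * (x ^ (k + 1) * y ^ (k + 1)) * y ≤ x * (x * y) ^ (k + 1) * y :=
        mul_le_mul_left (mul_le_mul_right ih x) y
      have step3 : x * (x * y) ^ (k + 1) * y ≤ x * (y * x) ^ (k + 1) * y :=
        mul_le_mul_left (mul_le_mul_right (E1 x y h (k + 1)) x) y
      calc x ^ (k + 2) * y ^ (k + 2) = x * (x ^ (k + 1) * y ^ (k + 1)) * y := step1
      _ ≤ x * (x * y) ^ (k + 1) * y := step2
      _ ≤ x * (y * x) ^ (k + 1) * y := step3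
      _ = (x * y) ^ (k + 2) := (comm_pow x y (k + 1)).symm
  have E3 : ∀ x y : G, x * y ≤ y * x → ∀ n : ℕ, (y * x) ^ (n + 1) ≤ y ^ (n + 1) * x ^ (n + 1) := by
    intro x y h n
    induction n with
    | zero => simp
    | succ k ih =>
      have step0 : (y * x) ^ (k + 2) = y * (x * y) ^ (k + 1) * x := comm_pow y x (k + 1)
      have step1 : y * (x * y) ^ (k + 1) * x ≤ y * (y * x) ^ (k + 1) * x :=
        mul_le_mul_left (mul_le_mul_right (E1 x y h (k + 1)) y) x
      have step2 : y * (y * x) ^ (k + 1) * x ≤ y * (y ^ (k + 1) * x ^ (k + 1)) * x :=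
        mul_le_mul_left (mul_le_mul_right ih y) x
      have step3 : y * (y ^ (k + 1) * x ^ (k + 1)) * x = y ^ (k + 2) * x ^ (k + 2) := by
        conv_rhs => rw [pow_succ' y, pow_succ x]
        simp [mul_assoc]
      calc (y * x) ^ (k + 2) = y * (x * y) ^ (k + 1) * x := step0
      _ ≤ y * (y * x) ^ (k + 1) * x := step1
      _ ≤ y * (y ^ (k + 1) * x ^ (k + 1)) * x := step2
      _ = y ^ (k + 2) * x ^ (k + 2) := step3
  -- additivity on ordered pairs
  have phi_ge_add : ∀ x y : G, x * y ≤ y * x → φ x + φ y ≤ φ (x * y) := by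
    intro x y h
    apply holder_lim 2
    intro n
    have h1 := K_ge x n
    have h2 := K_ge y n
    have h3 : (q (x ^ (n + 1)) : ℝ) + (q (y ^ (n + 1)) : ℝ) ≤ (q (x ^ (n + 1) * y ^ (n + 1)) : ℝ) := by
      exact_mod_cast qsup (x ^ (n + 1)) (y ^ (n + 1))
    have h4 : (q (x ^ (n + 1) * y ^ (n + 1)) : ℝ) ≤ (q ((x * y) ^ (n + 1)) : ℝ) := by
      exact_mod_cast qmono _ _ (E2 x y h n)
    have h5 := K_le (x * y) n
    nlinarith
  have phi_le_add : ∀ x y : G, x * y ≤ y * x → φ (x * y) ≤ φ x + φ y := by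
    intro x y h
    apply holder_lim 2
    intro n
    have h1 := K_ge (x * y) n
    have h2 : (q ((x * y) ^ (n + 1)) : ℝ) ≤ (q (y ^ (n + 1) * x ^ (n + 1)) : ℝ) := by
      exact_mod_cast qmono _ _ ((E1 x y h (n + 1)).trans (E3 x y h n))
    have h3 : (q (y ^ (n + 1) * x ^ (n + 1)) : ℝ) ≤
        (q (y ^ (n + 1)) : ℝ) + (q (x ^ (n + 1)) : ℝ) + 1 := by
      exact_mod_cast qsub (y ^ (n + 1)) (x ^ (n + 1))
    have h4 := K_le x n
    have h5 := K_le y n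
    nlinarith
  -- φ is conjugation-symmetric on products
  have phi_comm_le : ∀ x y : G, φ (y * x) ≤ φ (x * y) := by
    intro x y
    apply holder_lim (φ (x * y) + 1 - (q x : ℝ) - (q y : ℝ))
    intro n
    have h1 := K_ge (y * x) n
    have h2 : (q x : ℤ) + q ((y * x) ^ (n + 1)) + q y ≤ q ((x * y) ^ (n + 2)) := by
      have e : (x * y) ^ (n + 2) = x * ((y * x) ^ (n + 1) * y) := by
        rw [comm_pow x y (n + 1), mul_assoc]
      rw [e]
      have hs1 := qsup x ((y * x) ^ (n + 1) * y)
      have hs2 := qsup ((y * x) ^ (n + 1)) y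
      omega
    have h2R : (q x : ℝ) + (q ((y * x) ^ (n + 1)) : ℝ) + (q y : ℝ) ≤
        (q ((x * y) ^ (n + 2)) : ℝ) := by exact_mod_cast h2
    have h3 := K_le (x * y) (n + 1)
    push_cast at h3
    nlinarith
  have phi_comm : ∀ x y : G, φ (x * y) = φ (y * x) :=
    fun x y => le_antisymm (phi_comm_le y x) (phi_comm_le x y)
  have phi_add : ∀ x y : G, φ (x * y) = φ x + φ y := by
    intro x y
    rcases le_total (x * y) (y * x) with h | h
    · exact le_antisymm (phi_le_add x y h) (phi_ge_add x y h)
    · rw [phi_comm x y]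
      rw [le_antisymm (phi_le_add y x h) (phi_ge_add y x h)]
      ring
  have phi_one : φ 1 = 0 := by
    have : ∀ n : ℕ, (q ((1 : G) ^ (n + 1)) : ℝ) / ((n : ℝ) + 1) = 0 := by
      intro n
      rw [one_pow, q1]
      simp
    rw [hφ]
    simp only [this]
    exact ciSup_const
  have phi_inv : ∀ x : G, φ x⁻¹ = -φ x := by
    intro x
    have := phi_add x x⁻¹
    rw [mul_inv_cancel, phi_one] at this
    linarith
  have phi_pos : ∀ x : G, 1 < x → 0 < φ x := by
    intro x hx
    obtain ⟨n, _, hn2⟩ := arch x a hx.ne'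
    have hx1 : (1 : G) ≤ x := hx.le
    have hnpos : 0 < n := by
      by_contra hcon
      push_neg at hcon
      have h1 : (0 : ℤ) ≤ -n := by omega
      have h2 : (1 : G) ≤ x ^ (-n) := by
        lift -n to ℕ using h1 with k hk
        rw [zpow_natCast]
        exact one_le_pow_of_one_le' hx1 k
      have h3 : x ^ n ≤ 1 := by
        calc x ^ n = x ^ n * 1 := (mul_one _).symm
        _ ≤ x ^ n * x ^ (-n) := mul_le_mul_right h2 _
        _ = 1 := by rw [← zpow_add]; simp
      exact absurd (hn2.trans_le h3) (not_lt_of_ge ha.le)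
    -- so a < x ^ n with n ≥ 1
    obtain ⟨m, rfl⟩ : ∃ m : ℕ, n = (m : ℤ) + 1 := ⟨(n - 1).toNat, by omega⟩
    have hax : a ≤ x ^ (m + 1) := by
      have : x ^ ((m : ℤ) + 1) = x ^ (m + 1) := by
        rw [← zpow_natCast]
        push_cast
        ring_nf
      rw [this] at hn2
      exact hn2.le
    have hq : (1 : ℤ) ≤ q (x ^ (m + 1)) := le_q 1 _ (by simpa using hax)
    have hF := F1 x m
    have hqR : (1 : ℝ) ≤ (q (x ^ (m + 1)) : ℝ) := by exact_mod_cast hq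
    have hm : (0 : ℝ) < (m : ℝ) + 1 := by positivity
    calc (0 : ℝ) < 1 / ((m : ℝ) + 1) := by positivity
    _ ≤ (q (x ^ (m + 1)) : ℝ) / ((m : ℝ) + 1) := by gcongr
    _ ≤ φ x := hF
  have phi_mono : ∀ g h : G, g < h → φ g < φ h := by
    intro g h hgh
    have h1 : (1 : G) < g⁻¹ * h := by
      have := mul_lt_mul_right hgh g⁻¹
      simpa using this
    have h2 := phi_pos _ h1
    rw [phi_add, phi_inv] at h2
    linarith
  refine ⟨φ, ?_, fun g h => phi_add g h, phi_mono⟩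
  intro g h heq
  by_contra hne
  rcases lt_or_gt_of_ne hne with hl | hl
  · exact absurd heq (phi_mono _ _ hl).ne
  · exact absurd heq.symm (phi_mono _ _ hl).ne

end HolderAux

theorem holder_theorem
    {G : Type*} [Group G]
    (lt : G → G → Prop) (hlt : IsBiOrdering lt)
    (harch : IsArchimedeanOrdering lt) :
    (∃ f : G → ℝ, Function.Injective f ∧
      (∀ g h : G, f (g * h) = f g + f h) ∧
      (∀ g h : G, lt g h → f g < f h)) ∧
    ∀ a b : G, a * b = b * a := by
  obtain ⟨hsto, hL, hR⟩ := hlt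
  haveI := hsto
  letI : DecidableRel lt := Classical.decRel lt
  letI : LinearOrder G := linearOrderOfSTO lt
  haveI : CovariantClass G G (· * ·) (· < ·) := ⟨fun f g h hgh => hL f g h hgh⟩
  haveI : CovariantClass G G (Function.swap (· * ·)) (· < ·) := ⟨fun f g h hgh => hR f g h hgh⟩
  obtain ⟨f, hinj, hadd, hmono⟩ := holder_core (G := G) (fun g h hg => harch g h hg)
  refine ⟨⟨f, hinj, hadd, fun g h hgh => hmono g h hgh⟩, fun a b => hinj ?_⟩
  rw [hadd, hadd, add_comm]
end

section
/- Let G be a group and φ an automorphism of G, and let G ⋊_φ ℤ denote the semidirect product in which the generator 1 ∈ ℤ acts on G by φ. Then G ⋊_φ ℤ is bi-orderable if and only if there exists a bi-ordering < of G that is preserved by φ (g < h implies φ(g) < φ(h)). -/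
theorem semidirect_product_with_int_biOrderable_iff
    {G : Type*} [Group G] (φ : MulAut G) :
    BiOrderable (G ⋊[zpowersHom (MulAut G) φ] Multiplicative ℤ) ↔
      ∃ lt : G → G → Prop, IsBiOrdering lt ∧
        ∀ g h : G, lt g h → lt (φ g) (φ h) := by
  constructor
  · rintro ⟨lt, ⟨hsto, hl, hr⟩⟩
    have htri := hsto.toTrichotomous
    have hirr := hsto.toIrrefl
    have htrans := hsto.toIsTrans
    refine ⟨fun g h => lt (SemidirectProduct.inl g) (SemidirectProduct.inl h),
      ⟨{ trichotomous := ?_, irrefl := ?_, trans := ?_ }, ?_, ?_⟩, ?_⟩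
    · intro a b hab hba
      rcases trichotomous_of lt (SemidirectProduct.inl a) (SemidirectProduct.inl b) with h | h | h
      · exact absurd h hab
      · exact SemidirectProduct.inl_injective h
      · exact absurd h hba
    · intro a; exact hirr.irrefl _
    · intro a b c hab hbc; exact htrans.trans _ _ _ hab hbc
    · intro f g h hgh
      simpa using hl (SemidirectProduct.inl f) _ _ hgh
    · intro f g h hgh
      simpa using hr (SemidirectProduct.inl f) _ _ hgh
    · intro g h hgh
      set t : Multiplicative ℤ := Multiplicative.ofAdd 1 with ht
      have key : ∀ x : G, (SemidirectProduct.inl (φ x) :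
          G ⋊[zpowersHom (MulAut G) φ] Multiplicative ℤ) =
          SemidirectProduct.inr t * SemidirectProduct.inl x * (SemidirectProduct.inr t)⁻¹ := by
        intro x
        have := SemidirectProduct.inl_aut (φ := zpowersHom (MulAut G) φ) t x
        simpa [ht] using this
      rw [key g, key h]
      exact hr _ _ _ (hl _ _ _ hgh)
  · rintro ⟨lt, ⟨hsto, hl, hr⟩, hφ⟩
    have htri := hsto.toTrichotomous
    have hirr := hsto.toIrrefl
    have htrans := hsto.toIsTrans
    -- φ⁻¹ preserves lt
    have hφinv : ∀ g h : G, lt g h → lt (φ⁻¹ g) (φ⁻¹ h) := by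
      intro g h hgh
      rcases trichotomous_of lt (φ⁻¹ g) (φ⁻¹ h) with h1 | h1 | h1
      · exact h1
      · exfalso
        have : g = h := by
          have := congrArg φ h1; simpa using this
        subst this; exact hirr.irrefl _ hgh
      · exfalso
        have := hφ _ _ h1
        simp only [MulAut.apply_inv_self] at this
        exact hirr.irrefl _ (htrans.trans _ _ _ hgh this)
    have hzpow : ∀ z : ℤ, ∀ g h : G, lt g h → lt ((φ ^ z) g) ((φ ^ z) h) := by
      intro z
      induction z using Int.induction_on with
      | zero => intro g h hgh; simpa using hgh
      | succ n ih =>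
          intro g h hgh
          have : φ ^ ((n : ℤ) + 1) = φ ^ (n : ℤ) * φ := by rw [zpow_add, zpow_one]
          rw [this]
          exact ih _ _ (hφ _ _ hgh)
      | pred n ih =>
          intro g h hgh
          have : φ ^ (-(n : ℤ) - 1) = φ ^ (-(n : ℤ)) * φ⁻¹ := by
            rw [zpow_sub, zpow_one]
          rw [this]
          exact ih _ _ (hφinv _ _ hgh)
    refine ⟨fun a b => a.right.toAdd < b.right.toAdd ∨
      (a.right = b.right ∧ lt a.left b.left), { trichotomous := ?_, irrefl := ?_, trans := ?_ }, ?_, ?_⟩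
    · intro a b hab hba
      rcases lt_trichotomy a.right.toAdd b.right.toAdd with h | h | h
      · exact absurd (Or.inl h) hab
      · have hre : a.right = b.right := by
          exact Multiplicative.toAdd.injective h
        rcases trichotomous_of lt a.left b.left with h1 | h1 | h1
        · exact absurd (Or.inr ⟨hre, h1⟩) hab
        · exact SemidirectProduct.ext h1 hre
        · exact absurd (Or.inr ⟨hre.symm, h1⟩) hba
      · exact absurd (Or.inl h) hba
    · rintro a (h | ⟨-, h⟩)
      · exact lt_irrefl _ h
      · exact hirr.irrefl _ h
    · rintro a b c (h1 | ⟨h1, h1'⟩) (h2 | ⟨h2, h2'⟩)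
      · exact Or.inl (h1.trans h2)
      · exact Or.inl (h2 ▸ h1)
      · exact Or.inl (h1 ▸ h2)
      · exact Or.inr ⟨h1.trans h2, htrans.trans _ _ _ h1' h2'⟩
    · rintro f a b (h | ⟨h, h'⟩)
      · left; simpa using h
      · right
        refine ⟨by simp [h], ?_⟩
        simp only [SemidirectProduct.mul_left]
        refine hl _ _ _ ?_
        have := hzpow f.right.toAdd _ _ h'
        simpa [zpowersHom_apply, h] using this
    · rintro f a b (h | ⟨h, h'⟩)
      · left; simpa using h
      · right
        refine ⟨by simp [h], ?_⟩
        simp only [SemidirectProduct.mul_left, h]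
        exact hr _ _ _ h'
end

section
/- Let G be a nontrivial finitely generated group and φ an automorphism of G, and suppose the semidirect product G ⋊_φ ℤ (with the generator 1 ∈ ℤ acting by φ) is bi-orderable. Then the characteristic polynomial of the induced ℚ-linear endomorphism φ_* ⊗ id of (G/G') ⊗_ℤ ℚ has a positive real root: there exists a real number r > 0 at which this characteristic polynomial (coefficients viewed in ℝ) vanishes. -/
set_option linter.unusedSectionVars false
set_option linter.unusedVariables false
set_option maxHeartbeats 1000000

open scoped TensorProduct

open Function

section OG


variable {G : Type*} [Group G] [LinearOrder G]
  [CovariantClass G G (· * ·) (· < ·)]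
  [CovariantClass G G (Function.swap (· * ·)) (· < ·)]
  [CovariantClass G G (· * ·) (· ≤ ·)]
  [CovariantClass G G (Function.swap (· * ·)) (· ≤ ·)]

/-- Convexity of a subgroup w.r.t. an order. -/
def IsConvexSub (H : Subgroup G) : Prop :=
  ∀ ⦃c b : G⦄, b ∈ H → 1 ≤ c → c ≤ b → c ∈ H

theorem isConvexSub_bot : IsConvexSub (⊥ : Subgroup G) := by
  intro c b hb h1 hcb
  simp only [Subgroup.mem_bot] at hb ⊢
  subst hb
  exact le_antisymm hcb h1

theorem one_le_max_inv (x : G) : 1 ≤ max x x⁻¹ := by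
  rcases le_total 1 x with h | h
  · exact le_max_of_le_left h
  · refine le_max_of_le_right ?_
    rw [← inv_inv 1, inv_le_inv_iff, inv_one]
    exact h

theorem isConvexSub_total {H K : Subgroup G} (hH : IsConvexSub H) (hK : IsConvexSub K) :
    H ≤ K ∨ K ≤ H := by
  by_contra hcon
  push_neg at hcon
  obtain ⟨h1, h2⟩ := hcon
  obtain ⟨x, hxH, hxK⟩ := SetLike.not_le_iff_exists.mp h1
  obtain ⟨y, hyK, hyH⟩ := SetLike.not_le_iff_exists.mp h2
  set x' := max x x⁻¹ with hx'
  set y' := max y y⁻¹ with hy'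
  have hx'H : x' ∈ H := by
    rcases max_choice x x⁻¹ with h | h <;> rw [hx', h]
    exacts [hxH, H.inv_mem hxH]
  have hx'K : x' ∉ K := by
    rcases max_choice x x⁻¹ with h | h <;> rw [hx', h]
    exacts [hxK, fun h' => hxK (by simpa using K.inv_mem h')]
  have hy'K : y' ∈ K := by
    rcases max_choice y y⁻¹ with h | h <;> rw [hy', h]
    exacts [hyK, K.inv_mem hyK]
  have hy'H : y' ∉ H := by
    rcases max_choice y y⁻¹ with h | h <;> rw [hy', h]
    exacts [hyH, fun h' => hyH (by simpa using H.inv_mem h')]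
  rcases le_total x' y' with h | h
  · exact hx'K (hK hy'K (one_le_max_inv x) h)
  · exact hy'H (hH hx'H (one_le_max_inv y) h)

/-- In a nontrivial f.g. bi-ordered group there is a maximal proper convex subgroup. -/
theorem exists_maximal_convex [Nontrivial G] [Group.FG G] :
    ∃ C : Subgroup G, IsConvexSub C ∧ C ≠ ⊤ ∧
      ∀ H : Subgroup G, IsConvexSub H → C < H → H = ⊤ := by
  classical
  set S : Set (Subgroup G) := {H | IsConvexSub H ∧ H ≠ ⊤} with hS
  have hbot : (⊥ : Subgroup G) ∈ S := by
    refine ⟨isConvexSub_bot, fun h => ?_⟩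
    obtain ⟨x, hx⟩ := exists_ne (1 : G)
    have hx2 := Subgroup.mem_top x
    rw [← h] at hx2
    exact hx (by simpa [Subgroup.mem_bot] using hx2)
  have ih : ∀ c ⊆ S, IsChain (· ≤ ·) c → ∀ y ∈ c, ∃ ub ∈ S, ∀ z ∈ c, z ≤ ub := by
    intro c hcS hchain y hy
    have hdir : DirectedOn (· ≤ ·) c := hchain.directedOn
    have hmem : ∀ x : G, x ∈ sSup c ↔ ∃ H ∈ c, x ∈ H := fun x =>
      Subgroup.mem_sSup_of_directedOn ⟨y, hy⟩ hdir
    refine ⟨sSup c, ⟨?_, ?_⟩, fun z hz => le_sSup hz⟩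
    · intro a b hb h1 hab
      obtain ⟨H, hHc, hbH⟩ := (hmem b).1 hb
      exact (hmem a).2 ⟨H, hHc, (hcS hHc).1 hbH h1 hab⟩
    · intro htop
      obtain ⟨T, hT, hTfin⟩ := Group.fg_iff.mp ‹Group.FG G›
      have hTfin' : T.Finite := hTfin
      have key : ∀ t : Finset G, (∀ x ∈ t, x ∈ sSup c) →
          ∃ H ∈ c, ∀ x ∈ t, x ∈ H := by
        intro t
        induction t using Finset.induction_on with
        | empty => exact fun _ => ⟨y, hy, by simp⟩
        | insert _ _ hnot IH =>
          intro hmem'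
          obtain ⟨H, hHc, hH⟩ := IH fun x hx => hmem' x (Finset.mem_insert_of_mem hx)
          obtain ⟨K, hKc, haK⟩ := (hmem _).1 (hmem' _ (Finset.mem_insert_self _ _))
          rcases hdir H hHc K hKc with ⟨L, hLc, hHL, hKL⟩
          exact ⟨L, hLc, fun x hx => by
            rcases Finset.mem_insert.mp hx with rfl | hx
            exacts [hKL haK, hHL (hH x hx)]⟩
      obtain ⟨H, hHc, hH⟩ := key hTfin'.toFinset fun x hx => htop ▸ Subgroup.mem_top x
      have : H = ⊤ := by
        rw [eq_top_iff, ← hT]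
        exact (Subgroup.closure_le H).2 (fun x hx => hH x (hTfin'.mem_toFinset.mpr hx))
      exact (hcS hHc).2 this
  obtain ⟨C, -, hCS, hCmax⟩ := zorn_le_nonempty₀ S ih ⊥ hbot
  exact ⟨C, hCS.1, hCS.2, fun H hHconv hCH => by
    by_contra hne
    exact absurd (hCmax (y := H) ⟨hHconv, hne⟩ hCH.le) (not_le_of_gt hCH)⟩



variable {G : Type*} [Group G] [LinearOrder G]
  [CovariantClass G G (· * ·) (· < ·)]
  [CovariantClass G G (Function.swap (· * ·)) (· < ·)]
  [CovariantClass G G (· * ·) (· ≤ ·)]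
  [CovariantClass G G (Function.swap (· * ·)) (· ≤ ·)]

theorem zpow_lt_zpow_e {e : G} (he : 1 < e) {m k : ℤ} (h : m < k) : e ^ m < e ^ k := by
  have h1 : (1 : G) < e ^ (k - m) := by
    have h2 : e ^ (k - m) = e ^ (k - m).toNat := by
      rw [← zpow_natCast, Int.toNat_of_nonneg (by omega)]
    rw [h2]
    exact one_lt_pow' he (by omega)
  calc e ^ m = e ^ m * 1 := by rw [mul_one]
    _ < e ^ m * e ^ (k - m) := mul_lt_mul_right h1 _
    _ = e ^ k := by rw [← zpow_add]; congr 1; omega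

theorem zpow_le_zpow_e {e : G} (he : 1 < e) {m k : ℤ} (h : m ≤ k) : e ^ m ≤ e ^ k := by
  rcases eq_or_lt_of_le h with rfl | h
  · exact le_rfl
  · exact (zpow_lt_zpow_e he h).le

theorem lt_of_zpow_lt_e {e : G} (he : 1 < e) {m k : ℤ} (h : e ^ m < e ^ k) : m < k := by
  by_contra hc
  exact absurd h (not_lt_of_ge (zpow_le_zpow_e he (by omega)))

/-- the set of rational approximations from below -/
def tset (e g : G) : Set ℝ :=
  {x | ∃ (m : ℤ) (n : ℕ), 0 < n ∧ e ^ m < g ^ n ∧ x = (m : ℝ) / (n : ℝ)}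

noncomputable def tau (e g : G) : ℝ := sSup (tset e g)

theorem tset_scale {e g : G} {m : ℤ} {n : ℕ} (hmn : e ^ m < g ^ n) (k : ℕ) (hk : 0 < k) :
    e ^ (m * (k : ℤ)) < g ^ (n * k) := by
  have h := pow_lt_pow_left' hk.ne' hmn
  rw [← pow_mul] at h
  rw [← zpow_natCast (e ^ m) k, ← zpow_mul] at h
  exact h

section Arch

variable {e : G} (he : 1 < e) (harch : ∀ g : G, ∃ n : ℕ, (e ^ n)⁻¹ ≤ g ∧ g ≤ e ^ n)

include he harch

theorem tset_nonempty (g : G) : (tset e g).Nonempty := by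
  obtain ⟨N, hlo, _⟩ := harch g
  refine ⟨((-(N : ℤ) - 1 : ℤ) : ℝ) / ((1 : ℕ) : ℝ), -(N : ℤ) - 1, 1, one_pos, ?_, rfl⟩
  have h1 : e ^ (-(N : ℤ) - 1) < e ^ (-(N : ℤ)) := zpow_lt_zpow_e he (by omega)
  have h2 : e ^ (-(N : ℤ)) = (e ^ N)⁻¹ := by rw [zpow_neg, zpow_natCast]
  rw [pow_one]
  exact lt_of_lt_of_le (h2 ▸ h1) hlo

theorem tset_bddAbove (g : G) : BddAbove (tset e g) := by
  obtain ⟨N, _, hhi⟩ := harch g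
  refine ⟨(N : ℝ), fun x hx => ?_⟩
  obtain ⟨m, n, hn, hmn, rfl⟩ := hx
  have h1 : g ^ n ≤ e ^ ((N : ℤ) * (n : ℤ)) := by
    have := pow_le_pow_left' hhi n
    rw [← pow_mul] at this
    rw [← zpow_natCast e (N * n)] at this
    push_cast at this ⊢
    exact this
  have h2 : m < (N : ℤ) * (n : ℤ) := lt_of_zpow_lt_e he (lt_of_lt_of_le hmn h1)
  rw [div_le_iff₀ (by exact_mod_cast hn)]
  calc (m : ℝ) ≤ (N : ℝ) * (n : ℝ) := by exact_mod_cast h2.le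
    _ = _ := by ring

theorem le_tau {g : G} {m : ℤ} {n : ℕ} (hn : 0 < n) (hmn : e ^ m < g ^ n) :
    (m : ℝ) / (n : ℝ) ≤ tau e g :=
  le_csSup (tset_bddAbove he harch g) ⟨m, n, hn, hmn, rfl⟩

theorem pow_le_of_tau_lt {g : G} {m : ℤ} {n : ℕ} (hn : 0 < n)
    (h : tau e g < (m : ℝ) / (n : ℝ)) : g ^ n ≤ e ^ m := by
  by_contra hc
  exact absurd h (not_lt_of_ge (le_tau he harch hn (lt_of_not_ge hc)))

theorem tau_pos_of {g : G} {n : ℕ} (hn : 0 < n) (h : e < g ^ n) : 0 < tau e g := by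
  have h1 : ((1 : ℤ) : ℝ) / (n : ℝ) ≤ tau e g := le_tau he harch hn (by rwa [zpow_one])
  have h2 : (0 : ℝ) < 1 / (n : ℝ) := by positivity
  calc (0:ℝ) < 1 / (n : ℝ) := h2
    _ ≤ tau e g := by push_cast at h1; linarith

theorem exists_pow_of_tau_pos {g : G} (h : 0 < tau e g) : ∃ n : ℕ, 0 < n ∧ e < g ^ n := by
  obtain ⟨x, hx, hx0⟩ := exists_lt_of_lt_csSup (tset_nonempty he harch g) h
  obtain ⟨m, n, hn, hmn, rfl⟩ := hx
  have hm : (0 : ℤ) < m := by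
    by_contra hc
    push_neg at hc
    have : ((m : ℝ) / (n : ℝ)) ≤ 0 := by
      apply div_nonpos_of_nonpos_of_nonneg
      · exact_mod_cast hc
      · positivity
    linarith
  refine ⟨n, hn, lt_of_le_of_lt ?_ hmn⟩
  calc e = e ^ (1 : ℤ) := (zpow_one e).symm
    _ ≤ e ^ m := zpow_le_zpow_e he (by omega)

theorem tau_e_self : tau e e = 1 := by
  apply le_antisymm
  · apply csSup_le (tset_nonempty he harch e)
    rintro x ⟨m, n, hn, hmn, rfl⟩
    have h1 : m < (n : ℤ) := by
      apply lt_of_zpow_lt_e he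
      rwa [zpow_natCast]
    rw [div_le_one (by exact_mod_cast hn)]
    exact_mod_cast h1.le
  · by_contra hc
    push_neg at hc
    obtain ⟨n, hn⟩ := exists_nat_one_div_lt (by linarith : (0:ℝ) < 1 - tau e e)
    have hn1 : 0 < n + 1 := Nat.succ_pos n
    have hmem : e ^ ((n : ℤ) + 1 - 1) < e ^ (n + 1) := by
      rw [← zpow_natCast e (n + 1)]
      apply zpow_lt_zpow_e he
      push_cast
      omega
    have h2 := le_tau he harch hn1 hmem
    rw [div_lt_iff₀ (by positivity : (0:ℝ) < (n:ℝ) + 1)] at hn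
    have h3 : ((n : ℤ) + 1 - 1 : ℤ) = (n : ℝ) → True := fun _ => trivial
    push_cast at h2
    rw [div_le_iff₀ (by positivity : (0:ℝ) < (n:ℝ) + 1)] at h2
    nlinarith [hc]

end Arch



variable {G : Type*} [Group G] [LinearOrder G]
  [CovariantClass G G (· * ·) (· < ·)]
  [CovariantClass G G (Function.swap (· * ·)) (· < ·)]
  [CovariantClass G G (· * ·) (· ≤ ·)]
  [CovariantClass G G (Function.swap (· * ·)) (· ≤ ·)]

theorem swap_pow_left {g h : G} (hc : h * g ≤ g * h) : ∀ k : ℕ, h ^ k * g ≤ g * h ^ k := by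
  intro k
  induction k with
  | zero => simp
  | succ k IH =>
    calc h ^ (k + 1) * g = h * (h ^ k * g) := by rw [pow_succ']; group
      _ ≤ h * (g * h ^ k) := mul_le_mul_right IH h
      _ = (h * g) * h ^ k := by group
      _ ≤ (g * h) * h ^ k := mul_le_mul_left hc _
      _ = g * h ^ (k + 1) := by rw [pow_succ']; group

theorem mul_pow_le {g h : G} (hc : h * g ≤ g * h) : ∀ n : ℕ, (g * h) ^ n ≤ g ^ n * h ^ n := by
  intro n
  induction n with
  | zero => simp
  | succ n IH =>
    calc (g * h) ^ (n + 1) = (g * h) ^ n * (g * h) := pow_succ _ _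
      _ ≤ (g ^ n * h ^ n) * (g * h) := mul_le_mul_left IH _
      _ = g ^ n * (h ^ n * g) * h := by group
      _ ≤ g ^ n * (g * h ^ n) * h := by
          exact mul_le_mul_left (mul_le_mul_right (swap_pow_left hc n) _) _
      _ = g ^ (n + 1) * h ^ (n + 1) := by rw [pow_succ', pow_succ]; group

theorem le_mul_pow {g h : G} (hc : h * g ≤ g * h) : ∀ n : ℕ, h ^ n * g ^ n ≤ (h * g) ^ n := by
  intro n
  have hc' : h⁻¹ * g⁻¹ ≤ g⁻¹ * h⁻¹ := by
    rw [← mul_inv_rev, ← mul_inv_rev, inv_le_inv_iff]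
    exact hc
  have h2 : ((h * g) ^ n)⁻¹ ≤ (h ^ n * g ^ n)⁻¹ := by
    calc ((h * g) ^ n)⁻¹ = ((h * g)⁻¹) ^ n := (inv_pow _ _).symm
      _ = (g⁻¹ * h⁻¹) ^ n := by rw [mul_inv_rev]
      _ ≤ (g⁻¹) ^ n * (h⁻¹) ^ n := mul_pow_le hc' n
      _ = (h ^ n * g ^ n)⁻¹ := by rw [inv_pow, inv_pow, ← mul_inv_rev]
  exact inv_le_inv_iff.mp h2

theorem conj_pow_identity (g h : G) : ∀ s : ℕ, (g * h) ^ (s + 1) = g * (h * g) ^ s * h := by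
  intro s
  induction s with
  | zero => simp
  | succ s IH =>
    calc (g * h) ^ (s + 1 + 1) = (g * h) ^ (s + 1) * (g * h) := pow_succ _ _
      _ = (g * (h * g) ^ s * h) * (g * h) := by rw [IH]
      _ = g * ((h * g) ^ s * (h * g)) * h := by group
      _ = g * (h * g) ^ (s + 1) * h := by rw [← pow_succ]



variable {G : Type*} [Group G] [LinearOrder G]
  [CovariantClass G G (· * ·) (· < ·)]
  [CovariantClass G G (Function.swap (· * ·)) (· < ·)]
  [CovariantClass G G (· * ·) (· ≤ ·)]
  [CovariantClass G G (Function.swap (· * ·)) (· ≤ ·)]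

section Arch

variable {e : G} (he : 1 < e) (harch : ∀ g : G, ∃ n : ℕ, (e ^ n)⁻¹ ≤ g ∧ g ≤ e ^ n)

include he harch

-- NEW MATERIAL BELOW

theorem tau_mul_le {g h : G} (hc : h * g ≤ g * h) :
    tau e (g * h) ≤ tau e g + tau e h := by
  apply csSup_le (tset_nonempty he harch _)
  rintro x ⟨m, n, hn, hmn, rfl⟩
  by_contra hgt
  push_neg at hgt
  have hδ : 0 < ((m : ℝ) / (n : ℝ) - tau e g - tau e h) / 2 := by linarith
  set δ : ℝ := ((m : ℝ) / (n : ℝ) - tau e g - tau e h) / 2 with hδdef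
  obtain ⟨r₁, hr₁a, hr₁b⟩ := exists_rat_btwn (show tau e g < tau e g + δ by linarith)
  obtain ⟨r₂, hr₂a, hr₂b⟩ := exists_rat_btwn (show tau e h < tau e h + δ by linarith)
  have hq₁ : 0 < r₁.den := r₁.pos
  have hq₂ : 0 < r₂.den := r₂.pos
  rw [Rat.cast_def] at hr₁a hr₁b hr₂a hr₂b
  have hg1 : g ^ r₁.den ≤ e ^ r₁.num := pow_le_of_tau_lt he harch hq₁ hr₁a
  have hh1 : h ^ r₂.den ≤ e ^ r₂.num := pow_le_of_tau_lt he harch hq₂ hr₂a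
  set k := r₁.den * r₂.den with hkdef
  have hk : 0 < k := Nat.mul_pos hq₁ hq₂
  have A : e ^ (m * (k : ℤ)) < (g * h) ^ (n * k) := tset_scale hmn k hk
  have B : (g * h) ^ (n * k) ≤ g ^ (n * k) * h ^ (n * k) := mul_pow_le hc _
  have Cg : g ^ (n * k) ≤ e ^ (r₁.num * ((n * r₂.den : ℕ) : ℤ)) := by
    calc g ^ (n * k) = (g ^ r₁.den) ^ (n * r₂.den) := by
          rw [← pow_mul]; congr 1; rw [hkdef]; ring
      _ ≤ (e ^ r₁.num) ^ (n * r₂.den) := pow_le_pow_left' hg1 _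
      _ = e ^ (r₁.num * ((n * r₂.den : ℕ) : ℤ)) := by
          rw [← zpow_natCast (e ^ r₁.num), ← zpow_mul]
  have Ch : h ^ (n * k) ≤ e ^ (r₂.num * ((n * r₁.den : ℕ) : ℤ)) := by
    calc h ^ (n * k) = (h ^ r₂.den) ^ (n * r₁.den) := by
          rw [← pow_mul]; congr 1; rw [hkdef]; ring
      _ ≤ (e ^ r₂.num) ^ (n * r₁.den) := pow_le_pow_left' hh1 _
      _ = e ^ (r₂.num * ((n * r₁.den : ℕ) : ℤ)) := by
          rw [← zpow_natCast (e ^ r₂.num), ← zpow_mul]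
  have D : g ^ (n * k) * h ^ (n * k) ≤
      e ^ (r₁.num * ((n * r₂.den : ℕ) : ℤ) + r₂.num * ((n * r₁.den : ℕ) : ℤ)) := by
    rw [zpow_add]
    exact mul_le_mul' Cg Ch
  have E : m * (k : ℤ) < r₁.num * ((n * r₂.den : ℕ) : ℤ) + r₂.num * ((n * r₁.den : ℕ) : ℤ) :=
    lt_of_zpow_lt_e he ((A.trans_le B).trans_le D)
  have hn' : (0 : ℝ) < (n : ℝ) := by exact_mod_cast hn
  have hq₁' : (0 : ℝ) < (r₁.den : ℝ) := by exact_mod_cast hq₁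
  have hq₂' : (0 : ℝ) < (r₂.den : ℝ) := by exact_mod_cast hq₂
  have E' : (m : ℝ) * ((r₁.den : ℝ) * (r₂.den : ℝ)) <
      (r₁.num : ℝ) * ((n : ℝ) * (r₂.den : ℝ)) + (r₂.num : ℝ) * ((n : ℝ) * (r₁.den : ℝ)) := by
    rw [hkdef] at E
    exact_mod_cast E
  have final : (m : ℝ) / (n : ℝ) < (r₁.num : ℝ) / (r₁.den : ℝ) + (r₂.num : ℝ) / (r₂.den : ℝ) := by
    rw [div_add_div _ _ (ne_of_gt hq₁') (ne_of_gt hq₂'), div_lt_div_iff₀ hn' (by positivity)]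
    nlinarith [E']
  linarith

theorem tau_mul_ge {g h : G} (hc : h * g ≤ g * h) :
    tau e h + tau e g ≤ tau e (h * g) := by
  have key : ∀ x₁ ∈ tset e h, ∀ x₂ ∈ tset e g, x₁ + x₂ ≤ tau e (h * g) := by
    rintro x₁ ⟨m₁, n₁, hn₁, hm₁, rfl⟩ x₂ ⟨m₂, n₂, hn₂, hm₂, rfl⟩
    have A : e ^ (m₁ * (n₂ : ℤ)) < h ^ (n₁ * n₂) := tset_scale hm₁ n₂ hn₂
    have B : e ^ (m₂ * (n₁ : ℤ)) < g ^ (n₁ * n₂) := by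
      have := tset_scale hm₂ n₁ hn₁
      rwa [Nat.mul_comm n₂ n₁] at this
    have C : e ^ (m₁ * (n₂ : ℤ) + m₂ * (n₁ : ℤ)) < h ^ (n₁ * n₂) * g ^ (n₁ * n₂) := by
      rw [zpow_add]
      exact mul_lt_mul_of_lt_of_lt A B
    have D := C.trans_le (le_mul_pow hc (n₁ * n₂))
    have E := le_tau he harch (Nat.mul_pos hn₁ hn₂) D
    have hn₁' : (0 : ℝ) < (n₁ : ℝ) := by exact_mod_cast hn₁
    have hn₂' : (0 : ℝ) < (n₂ : ℝ) := by exact_mod_cast hn₂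
    have heq : (m₁ : ℝ) / (n₁ : ℝ) + (m₂ : ℝ) / (n₂ : ℝ) =
        ((m₁ * (n₂ : ℤ) + m₂ * (n₁ : ℤ) : ℤ) : ℝ) / ((n₁ * n₂ : ℕ) : ℝ) := by
      push_cast
      field_simp
    rw [heq]
    exact E
  have h1 : ∀ x₁ ∈ tset e h, x₁ ≤ tau e (h * g) - tau e g := by
    intro x₁ hx₁
    have h2 : tau e g ≤ tau e (h * g) - x₁ :=
      csSup_le (tset_nonempty he harch g) (fun x₂ hx₂ => by linarith [key x₁ hx₁ x₂ hx₂])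
    linarith
  have h3 : tau e h ≤ tau e (h * g) - tau e g := csSup_le (tset_nonempty he harch h) h1
  linarith

theorem tau_comm_le (g h : G) : tau e (g * h) ≤ tau e (h * g) := by
  apply csSup_le (tset_nonempty he harch _)
  rintro x ⟨m, n, hn, hmn, rfl⟩
  by_contra hgt
  push_neg at hgt
  obtain ⟨r, hra, hrb⟩ := exists_rat_btwn hgt
  have hq : 0 < r.den := r.pos
  rw [Rat.cast_def] at hra hrb
  have hpow : (h * g) ^ r.den ≤ e ^ r.num := pow_le_of_tau_lt he harch hq hra
  obtain ⟨Bg, _, hBg⟩ := harch g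
  obtain ⟨Bh, _, hBh⟩ := harch h
  set B := max Bg Bh with hBdef
  have hgB : g ≤ e ^ B := hBg.trans (pow_le_pow_right' he.le (le_max_left _ _))
  have hhB : h ≤ e ^ B := hBh.trans (pow_le_pow_right' he.le (le_max_right _ _))
  have key : ∀ k : ℕ, 0 < k →
      m * ((r.den * k + 1 : ℕ) : ℤ) < (r.num * (k : ℤ) + 2 * (B : ℤ)) * (n : ℤ) := by
    intro k hk
    have hmid : (h * g) ^ (r.den * k) ≤ e ^ (r.num * (k : ℤ)) := by
      calc (h * g) ^ (r.den * k) = ((h * g) ^ r.den) ^ k := pow_mul _ _ _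
        _ ≤ (e ^ r.num) ^ k := pow_le_pow_left' hpow k
        _ = e ^ (r.num * (k : ℤ)) := by rw [← zpow_natCast (e ^ r.num), ← zpow_mul]
    have h1 : (g * h) ^ (r.den * k + 1) ≤ e ^ (r.num * (k : ℤ) + 2 * (B : ℤ)) := by
      calc (g * h) ^ (r.den * k + 1) = g * (h * g) ^ (r.den * k) * h :=
            conj_pow_identity g h _
        _ ≤ e ^ B * (h * g) ^ (r.den * k) * (e ^ B) :=
            mul_le_mul' (mul_le_mul' hgB le_rfl) hhB
        _ ≤ e ^ B * e ^ (r.num * (k : ℤ)) * (e ^ B) :=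
            mul_le_mul' (mul_le_mul' le_rfl hmid) le_rfl
        _ = e ^ (r.num * (k : ℤ) + 2 * (B : ℤ)) := by
            rw [← zpow_natCast e B, ← zpow_add, ← zpow_add]
            congr 1
            ring
    have h2 : e ^ (m * ((r.den * k + 1 : ℕ) : ℤ)) < (g * h) ^ (n * (r.den * k + 1)) :=
      tset_scale hmn _ (by omega)
    have h3 : (g * h) ^ (n * (r.den * k + 1)) = ((g * h) ^ (r.den * k + 1)) ^ n := by
      rw [Nat.mul_comm, pow_mul]
    have h4 : ((g * h) ^ (r.den * k + 1)) ^ n ≤ (e ^ (r.num * (k : ℤ) + 2 * (B : ℤ))) ^ n :=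
      pow_le_pow_left' h1 n
    have h5 : (e ^ (r.num * (k : ℤ) + 2 * (B : ℤ))) ^ n
        = e ^ ((r.num * (k : ℤ) + 2 * (B : ℤ)) * (n : ℤ)) := by
      rw [← zpow_natCast (e ^ _), ← zpow_mul]
    have h6 : e ^ (m * ((r.den * k + 1 : ℕ) : ℤ))
        < e ^ ((r.num * (k : ℤ) + 2 * (B : ℤ)) * (n : ℤ)) := by
      rw [← h5]
      exact (h2.trans_le (h3 ▸ h4))
    exact lt_of_zpow_lt_e he h6
  have hmq : m * (r.den : ℤ) ≤ r.num * (n : ℤ) := by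
    by_contra hx
    push_neg at hx
    have hd : 1 ≤ m * (r.den : ℤ) - r.num * (n : ℤ) := by omega
    obtain ⟨k₀, hk₀, hk₀'⟩ : ∃ k₀ : ℕ, 0 < k₀ ∧ 2 * (B : ℤ) * (n : ℤ) - m < (k₀ : ℤ) := by
      refine ⟨(2 * (B : ℤ) * (n : ℤ) - m).toNat + 1, Nat.succ_pos _, ?_⟩
      have h7 := Int.self_le_toNat (2 * (B : ℤ) * (n : ℤ) - m)
      push_cast
      omega
    have hineq := key k₀ hk₀
    have hk₀nonneg : (0 : ℤ) ≤ (k₀ : ℤ) := by positivity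
    have e2 : (m * (r.den : ℤ) - r.num * (n : ℤ)) * (k₀ : ℤ) < 2 * (B : ℤ) * (n : ℤ) - m := by
      push_cast at hineq
      ring_nf at hineq ⊢
      linarith
    have e3 : (k₀ : ℤ) ≤ (m * (r.den : ℤ) - r.num * (n : ℤ)) * (k₀ : ℤ) := by
      calc (k₀ : ℤ) = 1 * (k₀ : ℤ) := (one_mul _).symm
        _ ≤ _ := mul_le_mul_of_nonneg_right hd hk₀nonneg
    linarith [e2, e3, hk₀']
  have hn' : (0 : ℝ) < (n : ℝ) := by exact_mod_cast hn
  have hq' : (0 : ℝ) < (r.den : ℝ) := by exact_mod_cast hq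
  have hfinal : (m : ℝ) / (n : ℝ) ≤ (r.num : ℝ) / (r.den : ℝ) := by
    rw [div_le_div_iff₀ hn' hq']
    exact_mod_cast hmq
  linarith

theorem tau_comm (g h : G) : tau e (g * h) = tau e (h * g) :=
  le_antisymm (tau_comm_le he harch g h) (tau_comm_le he harch h g)

theorem tau_mul_of {g h : G} (hc : h * g ≤ g * h) :
    tau e (g * h) = tau e g + tau e h := by
  have l1 := tau_mul_le he harch hc
  have l2 := tau_mul_ge he harch hc
  have l3 := tau_comm he harch g h
  linarith

theorem tau_mul (g h : G) : tau e (g * h) = tau e g + tau e h := by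
  rcases le_total (h * g) (g * h) with hc | hc
  · exact tau_mul_of he harch hc
  · have l1 := tau_mul_of he harch (g := h) (h := g) hc
    have l2 := tau_comm he harch g h
    linarith

end Arch


/-- The subgroup of elements bounded by powers of `g`. -/
def powBounded (g : G) (hg : 1 ≤ g) : Subgroup G where
  carrier := {x | ∃ n : ℕ, (g ^ n)⁻¹ ≤ x ∧ x ≤ g ^ n}
  one_mem' := ⟨0, by simp⟩
  mul_mem' := by
    rintro x y ⟨a, hal, har⟩ ⟨b, hbl, hbr⟩
    refine ⟨a + b, ?_, ?_⟩
    · have h1 := mul_le_mul' hal hbl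
      rw [← mul_inv_rev, ← pow_add] at h1
      rwa [Nat.add_comm a b]
    · have h1 := mul_le_mul' har hbr
      rwa [← pow_add] at h1
  inv_mem' := by
    rintro x ⟨n, hl, hr⟩
    refine ⟨n, inv_le_inv_iff.mpr hr, ?_⟩
    have h1 := inv_le_inv_iff.mpr hl
    rwa [inv_inv] at h1

theorem powBounded_convex (g : G) (hg : 1 ≤ g) : IsConvexSub (powBounded g hg) := by
  rintro c b ⟨n, hl, hr⟩ h1 hcb
  refine ⟨n, ?_, hcb.trans hr⟩
  have h2 : (1 : G) ≤ g ^ n := Left.one_le_pow_of_le hg n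
  have h3 := inv_le_inv_iff.mpr h2
  rw [inv_one] at h3
  exact h3.trans h1

theorem mem_powBounded_self (g : G) (hg : 1 ≤ g) : g ∈ powBounded g hg := by
  refine ⟨1, ?_, (pow_one g).ge⟩
  rw [pow_one]
  have h3 := inv_le_inv_iff.mpr hg
  rw [inv_one] at h3
  exact h3.trans hg

theorem addhom_tau_one {τ : G → ℝ} (hτ : ∀ a b : G, τ (a * b) = τ a + τ b) : τ 1 = 0 := by
  have := hτ 1 1
  rw [mul_one] at this
  linarith

theorem addhom_inv {τ : G → ℝ} (hτ : ∀ a b : G, τ (a * b) = τ a + τ b) (g : G) :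
    τ g⁻¹ = -τ g := by
  have h1 := hτ g g⁻¹
  rw [mul_inv_cancel, addhom_tau_one hτ] at h1
  linarith

theorem addhom_pow {τ : G → ℝ} (hτ : ∀ a b : G, τ (a * b) = τ a + τ b) (g : G) (n : ℕ) :
    τ (g ^ n) = n * τ g := by
  induction n with
  | zero => simpa using addhom_tau_one hτ
  | succ n IH => rw [pow_succ, hτ, IH]; push_cast; ring

theorem addhom_zpow {τ : G → ℝ} (hτ : ∀ a b : G, τ (a * b) = τ a + τ b) (g : G) (z : ℤ) :
    τ (g ^ z) = z * τ g := by
  rcases z with n | n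
  · rw [Int.ofNat_eq_coe, zpow_natCast, addhom_pow hτ]
    push_cast; ring
  · rw [zpow_negSucc, addhom_inv hτ, addhom_pow hτ]
    push_cast; ring

theorem rigidity {σ τ : G → ℝ} (hσ : ∀ a b : G, σ (a * b) = σ a + σ b)
    (hτ : ∀ a b : G, τ (a * b) = τ a + τ b) (hpos : ∀ g : G, 0 < τ g ↔ 0 < σ g)
    {g₀ : G} (h₀ : 0 < τ g₀) : ∀ g : G, σ g = (σ g₀ / τ g₀) * τ g := by
  intro g
  have hσ0 : 0 < σ g₀ := (hpos g₀).mp h₀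
  have claim : ∀ r : ℚ, (τ g / τ g₀ < (r : ℝ)) ↔ (σ g / σ g₀ < (r : ℝ)) := by
    intro r
    have hq : (0 : ℝ) < (r.den : ℝ) := by exact_mod_cast r.pos
    set w := g₀ ^ r.num * (g ^ (r.den : ℤ))⁻¹ with hw
    have hτw : τ w = r.num * τ g₀ - r.den * τ g := by
      rw [hw, hτ, addhom_zpow hτ, addhom_inv hτ, addhom_zpow hτ]
      push_cast; ring
    have hσw : σ w = r.num * σ g₀ - r.den * σ g := by
      rw [hw, hσ, addhom_zpow hσ, addhom_inv hσ, addhom_zpow hσ]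
      push_cast; ring
    have h1 : τ g / τ g₀ < (r : ℝ) ↔ 0 < τ w := by
      rw [Rat.cast_def, div_lt_div_iff₀ h₀ hq, hτw]
      constructor <;> intro <;> linarith
    have h2 : σ g / σ g₀ < (r : ℝ) ↔ 0 < σ w := by
      rw [Rat.cast_def, div_lt_div_iff₀ hσ0 hq, hσw]
      constructor <;> intro <;> linarith
    rw [h1, h2, hpos]
  have heq : τ g / τ g₀ = σ g / σ g₀ := by
    by_contra hne
    rcases lt_or_gt_of_ne hne with hlt | hlt
    · obtain ⟨r, h1, h2⟩ := exists_rat_btwn hlt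
      exact absurd ((claim r).mp h1) (not_lt_of_gt h2)
    · obtain ⟨r, h1, h2⟩ := exists_rat_btwn hlt
      exact absurd ((claim r).mpr h1) (not_lt_of_gt h2)
  rw [div_eq_div_iff (ne_of_gt h₀) (ne_of_gt hσ0)] at heq
  field_simp
  nlinarith [heq]

theorem key_construction [Nontrivial G] [Group.FG G] (φ : MulAut G)
    (hφ : ∀ a b : G, a < b → φ a < φ b) :
    ∃ (τ : G → ℝ) (α : ℝ), 0 < α ∧ (∀ a b : G, τ (a * b) = τ a + τ b) ∧
      (∃ g : G, τ g = 1) ∧ (∀ g : G, τ (φ g) = α * τ g) := by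
  obtain ⟨C, hCconv, hCtop, hCmax⟩ := exists_maximal_convex (G := G)
  obtain ⟨e₀, he₀⟩ : ∃ x : G, x ∉ C := by
    by_contra hcon
    push_neg at hcon
    exact hCtop ((Subgroup.eq_top_iff' C).mpr hcon)
  set e := max e₀ e₀⁻¹ with hedef
  have heC : e ∉ C := by
    rcases max_choice e₀ e₀⁻¹ with h | h <;> rw [hedef, h]
    exacts [he₀, fun h' => he₀ (by simpa using C.inv_mem h')]
  have he1 : (1 : G) ≤ e := one_le_max_inv e₀
  have he : (1 : G) < e := lt_of_le_of_ne he1 (fun h => heC (h ▸ C.one_mem))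
  have hbnd : ∀ (x : G) (hx1 : 1 ≤ x), x ∉ C → powBounded x hx1 = ⊤ := by
    intro x hx1 hxC
    have hconv := powBounded_convex x hx1
    have hmem := mem_powBounded_self x hx1
    rcases isConvexSub_total hCconv hconv with h | h
    · exact hCmax _ hconv (lt_of_le_of_ne h (fun hEq => hxC (hEq ▸ hmem)))
    · exact absurd (h hmem) hxC
  have harch : ∀ g : G, ∃ n : ℕ, (e ^ n)⁻¹ ≤ g ∧ g ≤ e ^ n := by
    intro g
    have h1 : g ∈ powBounded e he1 := by
      rw [hbnd e he1 heC]
      exact Subgroup.mem_top g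
    exact h1
  have hpos : ∀ g : G, 0 < tau e g ↔ (g ∉ C ∧ 1 < g) := by
    intro g
    constructor
    · intro h
      obtain ⟨n, hn, hlt⟩ := exists_pow_of_tau_pos he harch h
      have hg1 : 1 < g := by
        by_contra hle
        push_neg at hle
        have h2 : g ^ n ≤ 1 := Right.pow_le_one_of_le hle
        exact absurd (hlt.trans_le h2) (not_lt_of_ge he.le)
      exact ⟨fun hgC => heC (hCconv (C.pow_mem hgC n) he.le hlt.le), hg1⟩
    · rintro ⟨hgC, hg1⟩
      have hfull := hbnd g hg1.le hgC
      have heB : e ∈ powBounded g hg1.le := by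
        rw [hfull]; exact Subgroup.mem_top e
      obtain ⟨n, _, hhi⟩ := heB
      have hn0 : n ≠ 0 := by
        rintro rfl
        rw [pow_zero] at hhi
        exact absurd he (not_lt_of_ge hhi)
      apply tau_pos_of he harch (n := 2 * n) (by omega)
      calc e ≤ g ^ n := hhi
        _ < g ^ (2 * n) := pow_lt_pow_right' hg1 (by omega)
  have hφiff : ∀ a b : G, a < b ↔ φ a < φ b := by
    intro a b
    refine ⟨hφ a b, fun h => ?_⟩
    rcases lt_trichotomy a b with h1 | h1 | h1
    · exact h1
    · exact absurd (h1 ▸ h) (lt_irrefl _)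
    · exact absurd (hφ b a h1) (asymm h)
  have hφle : ∀ (ψ : MulAut G), (∀ a b : G, a < b ↔ ψ a < ψ b) →
      ∀ a b : G, a ≤ b ↔ ψ a ≤ ψ b := by
    intro ψ hψ a b
    rw [← not_lt, ← not_lt, hψ b a]
  have himg : ∀ (ψ : MulAut G), (∀ a b : G, a < b ↔ ψ a < ψ b) →
      IsConvexSub (Subgroup.map ψ.toMonoidHom C) := by
    intro ψ hψ c b hb h1 hcb
    obtain ⟨b₀, hb₀, rfl⟩ := hb
    refine ⟨ψ.symm c, hCconv hb₀ ?_ ?_, by simp⟩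
    · have h2 := (hφle ψ hψ (ψ.symm 1) (ψ.symm c)).mpr (by simpa using h1)
      simpa using h2
    · exact (hφle ψ hψ (ψ.symm c) b₀).mpr (by simpa using hcb)
  have hsymm_iff : ∀ a b : G, a < b ↔ φ.symm a < φ.symm b := by
    intro a b
    have h1 := hφiff (φ.symm a) (φ.symm b)
    rw [MulEquiv.apply_symm_apply, MulEquiv.apply_symm_apply] at h1
    exact h1.symm
  have hmaptop : ∀ (ψ : MulAut G), Subgroup.map ψ.toMonoidHom C = ⊤ → C = ⊤ := by
    intro ψ htop
    have h5 := Subgroup.comap_map_eq_self_of_injective (f := ψ.toMonoidHom) ψ.injective C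
    rw [htop] at h5
    rw [← h5]
    ext x
    simp [Subgroup.mem_comap]
  have hfix : ∀ (ψ : MulAut G), (∀ a b : G, a < b ↔ ψ a < ψ b) →
      C ≤ Subgroup.map ψ.toMonoidHom C → Subgroup.map ψ.toMonoidHom C = C := by
    intro ψ hψ hle
    rcases eq_or_lt_of_le hle with h2 | h2
    · exact h2.symm
    · exact absurd (hmaptop ψ (hCmax _ (himg ψ hψ) h2)) hCtop
  have hφC : ∀ x : G, φ x ∈ C ↔ x ∈ C := by
    have hCeq : Subgroup.map φ.toMonoidHom C = C := by
      rcases isConvexSub_total hCconv (himg φ hφiff) with h | h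
      · exact hfix φ hφiff h
      · have h2 : C ≤ Subgroup.map φ.symm.toMonoidHom C := by
          intro x hx
          exact ⟨φ x, h ⟨x, hx, rfl⟩, φ.symm_apply_apply x⟩
        have h3 := hfix φ.symm hsymm_iff h2
        calc Subgroup.map φ.toMonoidHom C
            = Subgroup.map φ.toMonoidHom (Subgroup.map φ.symm.toMonoidHom C) := by rw [h3]
          _ = C := by
              ext x
              constructor
              · rintro ⟨y, ⟨z, hz, rfl⟩, rfl⟩
                simpa using hz
              · intro hx
                exact ⟨φ.symm x, ⟨x, hx, rfl⟩, φ.apply_symm_apply x⟩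
    intro x
    constructor
    · intro hx
      rw [← hCeq] at hx
      obtain ⟨y, hy, hyx⟩ := hx
      rwa [← φ.injective hyx]
    · intro hx
      rw [← hCeq]
      exact ⟨x, hx, rfl⟩
  have hτadd := tau_mul he harch
  set σ : G → ℝ := fun g => tau e (φ g) with hσdef
  have hσadd : ∀ a b : G, σ (a * b) = σ a + σ b := by
    intro a b
    simp only [hσdef, map_mul]
    exact hτadd _ _
  have hposσ : ∀ g : G, 0 < tau e g ↔ 0 < σ g := by
    intro g
    simp only [hσdef]
    rw [hpos g, hpos (φ g)]
    have h2 : (1 : G) < φ g ↔ 1 < g := by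
      have h3 := hφiff 1 g
      rw [map_one] at h3
      exact h3.symm
    rw [hφC g, h2]
  have h₀ : 0 < tau e e := by rw [tau_e_self he harch]; norm_num
  have hrig := rigidity hσadd hτadd hposσ h₀
  have hα : 0 < σ e := (hposσ e).mp h₀
  refine ⟨tau e, σ e / tau e e, div_pos hα h₀, hτadd, ⟨e, tau_e_self he harch⟩, fun g => hrig g⟩


end OG

theorem final_linear_algebra {G : Type*} [Group G] [Group.FG G] (φ : MulAut G)
    (τ : G → ℝ) (α : ℝ) (hα : 0 < α) (hadd : ∀ a b : G, τ (a * b) = τ a + τ b)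
    (hne : ∃ g : G, τ g = 1) (hsc : ∀ g : G, τ (φ g) = α * τ g) :
    haveI : Module.Finite ℤ (Additive (Abelianization G)) :=
      Module.Finite.iff_addGroup_fg.mpr
        (GroupFG.iff_add_fg.mp
          (Group.fg_of_surjective (f := Abelianization.of (G := G))
            (fun x => Quotient.inductionOn x fun g => ⟨g, rfl⟩)))
    ∃ r : ℝ, 0 < r ∧
      Polynomial.aeval r
        (LinearMap.charpoly
          (LinearMap.baseChange ℚ
            (MonoidHom.toAdditive
              (Abelianization.map φ.toMonoidHom)).toIntLinearMap)) = 0 := by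
  haveI hfin : Module.Finite ℤ (Additive (Abelianization G)) :=
    Module.Finite.iff_addGroup_fg.mpr
      (GroupFG.iff_add_fg.mp
        (Group.fg_of_surjective (f := Abelianization.of (G := G))
          (fun x => Quotient.inductionOn x fun g => ⟨g, rfl⟩)))
  set A := Additive (Abelianization G) with hA
  set L : A →ₗ[ℤ] A :=
    (MonoidHom.toAdditive (Abelianization.map φ.toMonoidHom)).toIntLinearMap with hL
  -- the induced additive map to ℝ
  set τm : G →* Multiplicative ℝ :=
    MonoidHom.mk' (fun g => Multiplicative.ofAdd (τ g))
      (fun a b => by simp [hadd]) with hτm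
  set lift : Abelianization G →* Multiplicative ℝ := Abelianization.lift τm with hlift
  set T₀ : A →+ ℝ :=
    AddMonoidHom.mk' (fun a => Multiplicative.toAdd (lift (Additive.toMul a)))
      (fun a b => by rw [toMul_add, map_mul, toAdd_mul]) with hT₀
  have hT₀of : ∀ g : G, T₀ (Additive.ofMul (Abelianization.of g)) = τ g := by
    intro g
    simp [hT₀, hlift, hτm]
  have hsurj : ∀ a : A, ∃ g : G, Additive.ofMul (Abelianization.of g) = a := by
    intro a
    obtain ⟨g, hg⟩ : ∃ g : G, Abelianization.of g = Additive.toMul a :=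
      Quotient.inductionOn (Additive.toMul a) fun g => ⟨g, rfl⟩
    exact ⟨g, by rw [hg, ofMul_toMul]⟩
  have hT₀L : ∀ a : A, T₀ (L a) = α * T₀ a := by
    intro a
    obtain ⟨g, rfl⟩ := hsurj a
    have h1 : L (Additive.ofMul (Abelianization.of g))
        = Additive.ofMul (Abelianization.of (φ g)) := by
      simp only [hL, AddMonoidHom.coe_toIntLinearMap, MonoidHom.toAdditive_apply_apply,
        toMul_ofMul, Abelianization.map_of]
      rfl
    rw [h1, hT₀of, hT₀of, hsc]
  -- base change to ℚ
  set f : (ℚ ⊗[ℤ] A) →ₗ[ℚ] (ℚ ⊗[ℤ] A) := LinearMap.baseChange ℚ L with hf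
  set T : (ℚ ⊗[ℤ] A) →ₗ[ℚ] ℝ := LinearMap.liftBaseChange ℚ T₀.toIntLinearMap with hT
  have hTf : ∀ v : ℚ ⊗[ℤ] A, T (f v) = α * T v := by
    intro v
    induction v using TensorProduct.induction_on with
    | zero => simp
    | tmul q a =>
      rw [hf, LinearMap.baseChange_tmul, hT, LinearMap.liftBaseChange_tmul,
        LinearMap.liftBaseChange_tmul]
      simp only [AddMonoidHom.coe_toIntLinearMap]
      rw [hT₀L]
      rw [Rat.smul_def, Rat.smul_def]
      ring
    | add x y hx hy => rw [map_add, map_add, map_add, hx, hy]; ring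
  -- base change to ℝ
  set F : (ℝ ⊗[ℚ] (ℚ ⊗[ℤ] A)) →ₗ[ℝ] (ℝ ⊗[ℚ] (ℚ ⊗[ℤ] A)) := LinearMap.baseChange ℝ f with hF
  set TR : (ℝ ⊗[ℚ] (ℚ ⊗[ℤ] A)) →ₗ[ℝ] ℝ := LinearMap.liftBaseChange ℝ T with hTR
  have hTRF : ∀ w, TR (F w) = α * TR w := by
    intro w
    induction w using TensorProduct.induction_on with
    | zero => simp
    | tmul r v =>
      rw [hF, LinearMap.baseChange_tmul, hTR, LinearMap.liftBaseChange_tmul,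
        LinearMap.liftBaseChange_tmul, hTf]
      simp only [smul_eq_mul]
      ring
    | add x y hx hy => rw [map_add, map_add, map_add, hx, hy]; ring
  obtain ⟨g₁, hg₁⟩ := hne
  have hTRne : TR ((1 : ℝ) ⊗ₜ[ℚ] ((1 : ℚ) ⊗ₜ[ℤ] (Additive.ofMul (Abelianization.of g₁)))) = 1 := by
    rw [hTR, LinearMap.liftBaseChange_tmul, hT, LinearMap.liftBaseChange_tmul]
    simp only [AddMonoidHom.coe_toIntLinearMap]
    rw [hT₀of, hg₁]
    norm_num
  -- eigenvalue argument
  haveI : Module.Finite ℚ (ℚ ⊗[ℤ] A) := Module.Finite.base_change ℤ ℚ A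
  haveI : Module.Finite ℝ (ℝ ⊗[ℚ] (ℚ ⊗[ℤ] A)) := Module.Finite.base_change ℚ ℝ (ℚ ⊗[ℤ] A)
  set E : (ℝ ⊗[ℚ] (ℚ ⊗[ℤ] A)) →ₗ[ℝ] (ℝ ⊗[ℚ] (ℚ ⊗[ℤ] A)) := F - α • LinearMap.id with hE
  have hTRE : ∀ w, TR (E w) = 0 := by
    intro w
    rw [hE]
    simp only [LinearMap.sub_apply, LinearMap.smul_apply, LinearMap.id_apply, map_sub, map_smul,
      smul_eq_mul]
    rw [hTRF]
    ring
  have hnotsurj : ¬ Function.Surjective E := by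
    intro hs
    obtain ⟨w, hw⟩ := hs ((1 : ℝ) ⊗ₜ[ℚ] ((1 : ℚ) ⊗ₜ[ℤ] (Additive.ofMul (Abelianization.of g₁))))
    have := hTRE w
    rw [hw, hTRne] at this
    norm_num at this
  have hnotinj : ¬ Function.Injective E := by
    intro hinj
    exact hnotsurj (LinearMap.surjective_of_injective hinj)
  have hker : LinearMap.ker E ≠ ⊥ := fun h => hnotinj (LinearMap.ker_eq_bot.mp h)
  obtain ⟨w, hwmem, hw0⟩ := Submodule.ne_bot_iff _ |>.mp hker
  have hFw : F w = α • w := by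
    have h1 : E w = 0 := hwmem
    rw [hE] at h1
    simp only [LinearMap.sub_apply, LinearMap.smul_apply, LinearMap.id_apply] at h1
    rw [sub_eq_zero] at h1
    exact h1
  have heig : Module.End.HasEigenvalue F α :=
    Module.End.hasEigenvalue_of_hasEigenvector
      ⟨Module.End.mem_eigenspace_iff.mpr hFw, hw0⟩
  have hroot : (minpoly ℝ F).IsRoot α := Module.End.isRoot_of_hasEigenvalue heig
  have hroot2 : (LinearMap.charpoly F).IsRoot α :=
    hroot.dvd (LinearMap.minpoly_dvd_charpoly F)
  refine ⟨α, hα, ?_⟩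
  have hbc : (LinearMap.charpoly F) = (LinearMap.charpoly f).map (algebraMap ℚ ℝ) := by
    rw [hF]
    exact LinearMap.charpoly_baseChange f ℝ
  rw [Polynomial.aeval_def, ← Polynomial.eval_map]
  have := hroot2
  rw [hbc] at this
  exact this

theorem pos_real_eigenvalue_of_biOrderable_semidirect_product
    {G : Type*} [Group G] [Nontrivial G] [Group.FG G] (φ : MulAut G)
    (hbo : BiOrderable (G ⋊[zpowersHom (MulAut G) φ] Multiplicative ℤ)) :
    haveI : Module.Finite ℤ (Additive (Abelianization G)) :=
      Module.Finite.iff_addGroup_fg.mpr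
        (GroupFG.iff_add_fg.mp
          (Group.fg_of_surjective (f := Abelianization.of (G := G))
            (fun x => Quotient.inductionOn x fun g => ⟨g, rfl⟩)))
    ∃ r : ℝ, 0 < r ∧
      Polynomial.aeval r
        (LinearMap.charpoly
          (LinearMap.baseChange ℚ
            (MonoidHom.toAdditive
              (Abelianization.map φ.toMonoidHom)).toIntLinearMap)) = 0 := by
  classical
  obtain ⟨lt, hsto, hL, hR⟩ := hbo
  haveI := hsto
  set ltG : G → G → Prop := fun a b =>
    lt (SemidirectProduct.inl a) (SemidirectProduct.inl b) with hltG
  haveI h1 : IsTrichotomous G ltG := ⟨fun a b => by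
    rcases trichotomous_of lt (SemidirectProduct.inl a) (SemidirectProduct.inl b) with h | h | h
    · exact fun h' _ => absurd h h'
    · exact fun _ _ => SemidirectProduct.inl_injective h
    · exact fun _ h' => absurd h h'⟩
  haveI h2 : IsIrrefl G ltG := ⟨fun a => irrefl_of lt _⟩
  haveI h3 : IsTrans G ltG := ⟨fun a b c hab hbc => trans_of lt hab hbc⟩
  haveI h4 : IsStrictOrder G ltG := {}
  haveI h5 : IsStrictTotalOrder G ltG := {}
  letI linG : LinearOrder G := linearOrderOfSTO ltG
  have hlt_def : ∀ a b : G, a < b ↔ ltG a b := fun a b => Iff.rfl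
  have hmul : ∀ x y : G, (SemidirectProduct.inl (x * y) :
      G ⋊[zpowersHom (MulAut G) φ] Multiplicative ℤ) =
      SemidirectProduct.inl x * SemidirectProduct.inl y := fun x y => map_mul _ x y
  haveI cov1 : CovariantClass G G (· * ·) (· < ·) := ⟨by
    intro f a b h
    rw [hlt_def] at h ⊢
    show lt (SemidirectProduct.inl (f * a)) (SemidirectProduct.inl (f * b))
    rw [hmul, hmul]
    exact hL _ _ _ h⟩
  haveI cov2 : CovariantClass G G (Function.swap (· * ·)) (· < ·) := ⟨by
    intro f a b h
    rw [hlt_def] at h ⊢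
    show lt (SemidirectProduct.inl (a * f)) (SemidirectProduct.inl (b * f))
    rw [hmul, hmul]
    exact hR _ _ _ h⟩
  haveI cov3 : CovariantClass G G (· * ·) (· ≤ ·) := ⟨by
    intro f a b h
    rcases h.lt_or_eq with h' | h'
    · exact le_of_lt (mul_lt_mul_right h' f)
    · rw [h']⟩
  haveI cov4 : CovariantClass G G (Function.swap (· * ·)) (· ≤ ·) := ⟨by
    intro f a b h
    rcases h.lt_or_eq with h' | h'
    · exact le_of_lt (mul_lt_mul_left h' f)
    · rw [h']⟩
  have hφ : ∀ a b : G, a < b → φ a < φ b := by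
    intro a b h
    rw [hlt_def] at h ⊢
    set x : G ⋊[zpowersHom (MulAut G) φ] Multiplicative ℤ :=
      SemidirectProduct.inr (Multiplicative.ofAdd (1 : ℤ)) with hx
    have key : ∀ y : G, (SemidirectProduct.inl (φ y) :
        G ⋊[zpowersHom (MulAut G) φ] Multiplicative ℤ) =
        x * SemidirectProduct.inl y * x⁻¹ := by
      intro y
      have h6 := SemidirectProduct.inl_aut (φ := zpowersHom (MulAut G) φ)
        (Multiplicative.ofAdd (1 : ℤ)) y
      have h7 : (zpowersHom (MulAut G) φ) (Multiplicative.ofAdd (1 : ℤ)) y = φ y := by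
        simp [zpowersHom_apply]
      rw [h7] at h6
      rw [h6, hx, map_inv]
    show lt (SemidirectProduct.inl (φ a)) (SemidirectProduct.inl (φ b))
    rw [key a, key b]
    rw [mul_assoc, mul_assoc]
    exact hL _ _ _ (hR _ _ _ h)
  obtain ⟨τ, α, hα, hadd, hne, hsc⟩ := key_construction φ hφ
  exact final_linear_algebra φ τ α hα hadd hne hsc
end

section
/- Let k be a positive integer and let 0 < n₁ < n₂ < ⋯ < n_k be a strictly increasing sequence of positive integers. Then for every positive real number α, the quantity (-1)^k + ∑_{j=1}^k (-1)^{k-j} (α^{n_j} + α^{-n_j}) is nonzero. In other words, the Laurent polynomial Δ(t) = (-1)^k + ∑_{j=1}^k (-1)^{k-j} (t^{n_j} + t^{-n_j}) has no positive real root. -/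
private lemma g_two {a : ℝ} (ha : 0 < a) : 2 ≤ a + a⁻¹ := by
  rw [← sub_nonneg]
  have : a + a⁻¹ - 2 = (a-1)^2 / a := by field_simp; ring
  rw [this]; positivity

private lemma g_mono {a b : ℝ} (ha : 0 < a) (hb : 0 < b) (h : 0 ≤ (b - a) * (a * b - 1)) :
    a + a⁻¹ ≤ b + b⁻¹ := by
  rw [← sub_nonneg]
  have : b + b⁻¹ - (a + a⁻¹) = (b - a) * (a * b - 1) / (a * b) := by field_simp; ring
  rw [this]; positivity

private lemma f_mono {α : ℝ} (hα : 0 < α) {m m' : ℕ} (h : m ≤ m') :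
    α ^ (m : ℤ) + α ^ (-(m : ℤ)) ≤ α ^ (m' : ℤ) + α ^ (-(m' : ℤ)) := by
  have ha : (0:ℝ) < α ^ (m : ℤ) := zpow_pos hα _
  have hb : (0:ℝ) < α ^ (m' : ℤ) := zpow_pos hα _
  rw [zpow_neg, zpow_neg]
  refine g_mono ha hb ?_
  have hmul : α ^ (m : ℤ) * α ^ (m' : ℤ) = α ^ ((m : ℤ) + m') := (zpow_add₀ hα.ne' _ _).symm
  rcases le_total 1 α with h1 | h1
  · have h2 : α ^ (m : ℤ) ≤ α ^ (m' : ℤ) := zpow_le_zpow_right₀ h1 (by exact_mod_cast h)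
    have h3 : (1:ℝ) ≤ α ^ ((m : ℤ) + m') := one_le_zpow₀ h1 (by positivity)
    rw [hmul] at *
    nlinarith
  · have h2 : α ^ (m' : ℤ) ≤ α ^ (m : ℤ) :=
      zpow_le_zpow_right_of_le_one₀ hα h1 (by exact_mod_cast h)
    have h3 : α ^ ((m : ℤ) + m') ≤ 1 := zpow_le_one₀ hα h1 (by positivity)
    rw [hmul] at *
    nlinarith

private lemma aux (f : ℕ → ℝ) (h2 : ∀ j, 2 ≤ f j) (hm : Monotone f) :
    ∀ k : ℕ, 1 ≤ (-1:ℝ)^(k+1) + ∑ j ∈ Finset.range (k+1), (-1:ℝ)^((k+1)-(j+1)) * f j ∧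
      (-1:ℝ)^(k+1) + ∑ j ∈ Finset.range (k+1), (-1:ℝ)^((k+1)-(j+1)) * f j ≤ f k - 1 := by
  intro k
  induction k with
  | zero => simp; linarith [h2 0]
  | succ k ih =>
    have key : (-1:ℝ)^(k+2) + ∑ j ∈ Finset.range (k+2), (-1:ℝ)^((k+2)-(j+1)) * f j
        = f (k+1) - ((-1:ℝ)^(k+1) + ∑ j ∈ Finset.range (k+1), (-1:ℝ)^((k+1)-(j+1)) * f j) := by
      rw [Finset.sum_range_succ]
      have hsum : ∑ j ∈ Finset.range (k+1), (-1:ℝ)^((k+2)-(j+1)) * f j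
          = -∑ j ∈ Finset.range (k+1), (-1:ℝ)^((k+1)-(j+1)) * f j := by
        rw [← Finset.sum_neg_distrib]
        refine Finset.sum_congr rfl fun j hj => ?_
        have hjk : j ≤ k := Nat.lt_succ_iff.mp (Finset.mem_range.mp hj)
        have he : (k+2)-(j+1) = ((k+1)-(j+1)) + 1 := by omega
        rw [he, pow_succ]
        ring
      rw [hsum]
      have : (k+2) - (k+1+1) = 0 := by omega
      rw [this, pow_succ]
      ring
    rw [key]
    have hmono : f k ≤ f (k+1) := hm (Nat.le_succ k)
    constructor <;> linarith [ih.1, ih.2, h2 (k+1)]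

theorem lspace_alexander_polynomial_no_positive_real_root
    (k : ℕ) (hk : 0 < k) (n : Fin k → ℕ)
    (hmono : StrictMono n) (hpos : ∀ j, 0 < n j)
    (α : ℝ) (hα : 0 < α) :
    (-1 : ℝ) ^ k +
      ∑ j : Fin k, (-1 : ℝ) ^ (k - ((j : ℕ) + 1)) *
        (α ^ (n j : ℤ) + α ^ (-(n j : ℤ))) ≠ 0 := by
  -- extend n to a monotone sequence on ℕ
  set n' : ℕ → ℕ := fun j => n ⟨min j (k-1), by omega⟩ with hn'
  have hn'eq : ∀ j : Fin k, n' (j : ℕ) = n j := by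
    intro j
    have : min (j : ℕ) (k-1) = (j : ℕ) := by omega
    simp [hn', this]
  have hn'mono : Monotone n' := by
    intro a b hab
    exact (hmono.le_iff_le).mpr (by simp [Fin.le_def]; omega)
  set f : ℕ → ℝ := fun j => α ^ (n' j : ℤ) + α ^ (-(n' j : ℤ)) with hf
  have hf2 : ∀ j, 2 ≤ f j := fun j => by
    rw [hf]; simpa [zpow_neg] using g_two (zpow_pos hα ((n' j : ℤ)))
  have hfm : Monotone f := fun a b hab => f_mono hα (hn'mono hab)
  have hsum : ∑ j : Fin k, (-1 : ℝ) ^ (k - ((j : ℕ) + 1)) *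
        (α ^ (n j : ℤ) + α ^ (-(n j : ℤ)))
      = ∑ j ∈ Finset.range k, (-1:ℝ)^(k-(j+1)) * f j := by
    rw [Finset.sum_range fun j => (-1:ℝ)^(k-(j+1)) * f j]
    refine Finset.sum_congr rfl fun j _ => ?_
    rw [hf]
    simp [hn'eq j]
  rw [hsum]
  obtain ⟨k, rfl⟩ : ∃ m, k = m + 1 := ⟨k - 1, by omega⟩
  have := (aux f hf2 hfm k).1
  linarith
end

section
/- Let n be a positive integer and let < be an Archimedean bi-ordering of the additive group ℚ^n. Then there exist real numbers α₁, …, α_n, linearly independent over ℚ, such that for all x, y ∈ ℚ^n, x < y if and only if x₁α₁ + ⋯ + x_nα_n < y₁α₁ + ⋯ + y_nα_n in ℝ. -/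
/-- An additive bi-ordering is Archimedean if for every `g ≠ 0` and every `h`
there is an integer `m` with `(-m) • g < h < m • g`. -/
def IsAddArchimedeanOrdering {A : Type*} [AddGroup A] (lt : A → A → Prop) : Prop :=
  ∀ g h : A, g ≠ 0 → ∃ m : ℤ, lt ((-m) • g) h ∧ lt h (m • g)

section Aux
variable {A : Type*} [AddCommGroup A] [Module ℚ A]

theorem aux_exists_embedding (lt : A → A → Prop) (hlt : IsAddBiOrdering lt)
    (harch : IsAddArchimedeanOrdering lt) (hA : ∃ a : A, a ≠ 0) :
    ∃ f : A →ₗ[ℚ] ℝ, Function.Injective f ∧ ∀ x y : A, lt x y ↔ f x < f y := by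
  haveI : IsStrictTotalOrder A lt := hlt.1
  letI : DecidableRel lt := Classical.decRel lt
  letI : LinearOrder A := linearOrderOfSTO lt
  have hlt_iff : ∀ x y : A, x < y ↔ lt x y := fun x y => Iff.rfl
  haveI : IsOrderedAddMonoid A :=
    { add_le_add_left := by
        intro a b hab c
        rcases hab with rfl | h
        · exact le_refl _
        · exact Or.inr (by simpa [add_comm] using hlt.2 a b c h) }
  -- positive rational smul preserves positivity
  have hsmul_pos : ∀ (q : ℚ) (x : A), 0 < q → 0 < x → 0 < q • x := by
    intro q x hq hx
    by_contra hle
    push_neg at hle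
    have h2 : (q.den : ℕ) • (q • x) ≤ 0 := nsmul_nonpos hle q.den
    have h3 : (q.den : ℕ) • (q • x) = q.num • x := by
      rw [← Nat.cast_smul_eq_nsmul ℚ, smul_smul, ← Int.cast_smul_eq_zsmul ℚ]
      congr 1
      have := Rat.num_div_den q
      field_simp
      rw [mul_comm, Rat.mul_den_eq_num]
    have h4 : (0:A) < q.num • x := zsmul_pos hx (by exact_mod_cast Rat.num_pos.mpr hq)
    rw [h3] at h2
    exact absurd h2 (not_le.mpr h4)
  -- strict mono of rational scaling
  have hsmul_lt : ∀ (q : ℚ) (x y : A), 0 < q → x < y → q • x < q • y := by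
    intro q x y hq hxy
    have := hsmul_pos q (y - x) hq (by simpa using hxy)
    rw [smul_sub] at this
    exact sub_pos.mp this
  -- Archimedean instance
  haveI : Archimedean A := by
    constructor
    intro x y hy
    obtain ⟨m, hm1, hm2⟩ := harch y x (ne_of_gt hy)
    have hm1' : (-m) • y < x := (hlt_iff _ _).mpr hm1
    have hm2' : x < m • y := (hlt_iff _ _).mpr hm2
    have hmpos : 0 < m := by
      by_contra hmn
      push_neg at hmn
      have h0 : (0:A) ≤ (-m) • y := zsmul_nonneg hy.le (by omega)
      have h1 : m • y ≤ 0 := by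
        have := neg_nonpos_of_nonneg h0
        rwa [neg_zsmul, neg_neg] at this
      exact absurd ((h0.trans_lt hm1').trans hm2') (not_lt.mpr h1)
    exact ⟨m.toNat, by rw [← natCast_zsmul, Int.toNat_of_nonneg hmpos.le]; exact hm2'.le⟩
  -- a positive element
  obtain ⟨a, ha⟩ := hA
  obtain ⟨g, hg⟩ : ∃ g : A, 0 < g := by
    rcases lt_trichotomy a 0 with h | h | h
    · exact ⟨-a, by simpa using h⟩
    · exact absurd h ha
    · exact ⟨a, h⟩
  have hgne : g ≠ 0 := ne_of_gt hg
  -- strict mono of scaling q ↦ q • g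
  have hmono : ∀ q r : ℚ, q < r → q • g < r • g := by
    intro q r h
    have := hsmul_pos (r - q) g (by linarith) hg
    rw [sub_smul] at this
    exact sub_pos.mp this
  have hmono_iff : ∀ q r : ℚ, q • g < r • g ↔ q < r := by
    intro q r
    refine ⟨fun h => ?_, hmono q r⟩
    by_contra hle
    push_neg at hle
    rcases eq_or_lt_of_le hle with rfl | h'
    · exact lt_irrefl _ h
    · exact absurd (hmono r q h') (not_lt.mpr h.le)
  -- the step lemma
  have step : ∀ x y : A, x < y → ∃ q : ℚ, x < q • g ∧ q • g < y := by
    intro x y hxy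
    have hd : 0 < y - x := sub_pos.mpr hxy
    obtain ⟨m, hm1, hm2⟩ := harch (y - x) g (ne_of_gt hd)
    have hm2' : g < m • (y - x) := (hlt_iff _ _).mpr hm2
    have hmpos : 0 < m := by
      by_contra hmn
      push_neg at hmn
      have h0 : (0:A) ≤ (-m) • (y - x) := zsmul_nonneg hd.le (by omega)
      have h1 : m • (y - x) ≤ 0 := by
        have := neg_nonpos_of_nonneg h0
        rwa [neg_zsmul, neg_neg] at this
      exact absurd (hg.trans hm2') (not_lt.mpr h1)
    set ε : ℚ := 1 / (m : ℚ) with hεdef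
    have hmQ : (0:ℚ) < (m:ℚ) := by exact_mod_cast hmpos
    have hεpos : 0 < ε := by positivity
    have hεg : 0 < ε • g := hsmul_pos ε g hεpos hg
    have hεd : ε • g < y - x := by
      have h2 := hsmul_lt ε g (m • (y - x)) hεpos hm2'
      rw [← Int.cast_smul_eq_zsmul ℚ m (y - x), smul_smul, hεdef,
        one_div, inv_mul_cancel₀ (ne_of_gt hmQ), one_smul] at h2
      rwa [hεdef, one_div]
    -- least integer k with x < k • (ε • g)
    have hinh : ∃ k : ℤ, x < k • (ε • g) := by
      obtain ⟨p, hp⟩ := Archimedean.arch x hεg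
      refine ⟨(p : ℤ) + 1, ?_⟩
      have h5 : x ≤ (p : ℤ) • (ε • g) := by rw [natCast_zsmul]; exact hp
      exact lt_of_le_of_lt h5 (zsmul_lt_zsmul_left hεg (by omega))
    have hbdd : ∃ b : ℤ, ∀ k : ℤ, x < k • (ε • g) → b ≤ k := by
      obtain ⟨p, hp⟩ := Archimedean.arch (-x) hεg
      refine ⟨-(p : ℤ), fun k hk => ?_⟩
      by_contra hkb
      push_neg at hkb
      have h3 : k • (ε • g) ≤ (-(p:ℤ)) • (ε • g) := zsmul_le_zsmul_left hεg.le hkb.le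
      have h4 : (-(p:ℤ)) • (ε • g) ≤ x := by
        rw [neg_zsmul, natCast_zsmul, neg_le]
        exact hp
      exact absurd hk (not_lt.mpr (h3.trans h4))
    obtain ⟨k, hk1, hk2⟩ := Int.exists_least_of_bdd hbdd hinh
    have hk3 : (k - 1) • (ε • g) ≤ x := by
      by_contra hc
      push_neg at hc
      have := hk2 (k - 1) hc
      omega
    refine ⟨(k : ℚ) * ε, ?_, ?_⟩
    · rwa [mul_smul, Int.cast_smul_eq_zsmul ℚ k (ε • g)]
    · rw [mul_smul, Int.cast_smul_eq_zsmul ℚ k (ε • g)]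
      have : k • (ε • g) = (k - 1) • (ε • g) + ε • g := by
        rw [sub_zsmul, one_zsmul]; abel
      rw [this]
      calc (k - 1) • (ε • g) + ε • g ≤ x + ε • g := by gcongr
        _ < x + (y - x) := by gcongr
        _ = y := by abel
  -- the cut map
  set L : A → Set ℚ := fun x => {q : ℚ | q • g < x} with hL
  set f₀ : A → ℝ := fun x => sSup ((fun q : ℚ => (q : ℝ)) '' L x) with hf₀
  have hmemL : ∀ x (q : ℚ), q ∈ L x ↔ q • g < x := fun _ _ => Iff.rfl
  have hne : ∀ x : A, ((fun q : ℚ => (q : ℝ)) '' L x).Nonempty := by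
    intro x
    obtain ⟨m, hm1, _⟩ := harch g x hgne
    refine ⟨((-m : ℤ) : ℚ), ⟨((-m : ℤ) : ℚ), ?_, rfl⟩⟩
    rw [hmemL, Int.cast_smul_eq_zsmul ℚ]
    exact (hlt_iff _ _).mpr hm1
  have hbdd : ∀ x : A, BddAbove ((fun q : ℚ => (q : ℝ)) '' L x) := by
    intro x
    obtain ⟨m, _, hm2⟩ := harch g x hgne
    refine ⟨((m : ℤ) : ℚ), ?_⟩
    rintro r ⟨q, hq, rfl⟩
    show (q : ℝ) ≤ (((m : ℤ) : ℚ) : ℝ)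
    have : q • g < ((m : ℤ) : ℚ) • g := by
      rw [Int.cast_smul_eq_zsmul ℚ]
      exact hq.trans ((hlt_iff _ _).mpr hm2)
    exact_mod_cast ((hmono_iff _ _).mp this).le
  have hle_f : ∀ (x : A) (q : ℚ), q • g < x → (q : ℝ) ≤ f₀ x :=
    fun x q hq => le_csSup (hbdd x) ⟨q, hq, rfl⟩
  have hf_le : ∀ (x : A) (B : ℝ), (∀ q : ℚ, q • g < x → (q : ℝ) ≤ B) → f₀ x ≤ B := by
    intro x B hB
    exact csSup_le (hne x) (by rintro r ⟨q, hq, rfl⟩; exact hB q hq)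
  -- additivity
  have hadd : ∀ x y : A, f₀ (x + y) = f₀ x + f₀ y := by
    intro x y
    apply le_antisymm
    · apply hf_le
      intro s hs
      -- s • g < x + y
      have key : ∀ ε : ℚ, 0 < ε → (s : ℝ) ≤ f₀ x + f₀ y + ε := by
        intro ε hε
        have hεg : 0 < ε • g := hsmul_pos ε g hε hg
        obtain ⟨q, hq1, hq2⟩ := step (x - ε • g) x (sub_lt_self x hεg)
        -- x - ε•g < q•g < x
        have hx_lt : x < (q + ε) • g := by
          rw [add_smul]
          exact sub_lt_iff_lt_add.mp hq1
        have hy : (s - q - ε) • g < y := by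
          have : (s - q - ε) • g = s • g - (q + ε) • g := by
            rw [sub_smul, sub_smul, add_smul]; abel
          rw [this]
          calc s • g - (q + ε) • g < (x + y) - (q + ε) • g := by gcongr
            _ < (x + y) - x := by gcongr
            _ = y := by abel
        have h1 : (q : ℝ) ≤ f₀ x := hle_f x q hq2
        have h2 : ((s - q - ε : ℚ) : ℝ) ≤ f₀ y := hle_f y _ hy
        push_cast at h2
        linarith
      by_contra hcon
      push_neg at hcon
      obtain ⟨ε, hε1, hε2⟩ := exists_rat_btwn (sub_pos.mpr hcon)
      have := key ε (by exact_mod_cast hε1)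
      linarith
    · have key2 : ∀ q : ℚ, q • g < x → (q : ℝ) ≤ f₀ (x + y) - f₀ y := by
        intro q hq
        rw [le_sub_iff_add_le]
        have h8 : f₀ y ≤ f₀ (x + y) - q := by
          apply hf_le
          intro r hr
          have h6 : (q + r) • g < x + y := by
            rw [add_smul]; exact add_lt_add hq hr
          have h7 := hle_f (x + y) (q + r) h6
          push_cast at h7
          linarith
        linarith
      have h := hf_le x (f₀ (x + y) - f₀ y) key2
      linarith
  -- strict monotonicity
  have hsm : ∀ x y : A, x < y → f₀ x < f₀ y := by
    intro x y hxy
    obtain ⟨q, hq1, hq2⟩ := step x y hxy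
    obtain ⟨r, hr1, hr2⟩ := step x (q • g) hq1
    have hrq : r < q := (hmono_iff _ _).mp hr2
    have h1 : f₀ x ≤ (r : ℝ) := by
      apply hf_le
      intro p hp
      exact_mod_cast ((hmono_iff _ _).mp (hp.trans hr1)).le
    have h2 : (q : ℝ) ≤ f₀ y := hle_f y q hq2
    calc f₀ x ≤ (r : ℝ) := h1
      _ < (q : ℝ) := by exact_mod_cast hrq
      _ ≤ f₀ y := h2
  -- assemble the linear map
  let F : A →+ ℝ := AddMonoidHom.mk' f₀ hadd
  refine ⟨F.toRatLinearMap, ?_, ?_⟩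
  · intro x y hxy
    by_contra hne'
    rcases lt_trichotomy x y with h | h | h
    · exact absurd hxy (ne_of_lt (hsm x y h))
    · exact hne' h
    · exact absurd hxy (ne_of_gt (hsm y x h))
  · intro x y
    rw [← hlt_iff]
    constructor
    · exact hsm x y
    · intro h
      rcases lt_trichotomy x y with h' | h' | h'
      · exact h'
      · subst h'; exact absurd h (lt_irrefl _)
      · exact absurd (hsm y x h') (not_lt.mpr h.le)

end Aux

theorem archimedean_biordering_of_rationals_is_linear_form
    (n : ℕ) (hn : 0 < n)
    (lt : (Fin n → ℚ) → (Fin n → ℚ) → Prop)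
    (hlt : IsAddBiOrdering lt) (harch : IsAddArchimedeanOrdering lt) :
    ∃ α : Fin n → ℝ, LinearIndependent ℚ α ∧
      ∀ x y : Fin n → ℚ,
        lt x y ↔ ∑ i, (x i : ℝ) * α i < ∑ i, (y i : ℝ) * α i := by
  obtain ⟨f, hinj, hf⟩ := aux_exists_embedding lt hlt harch
    ⟨Pi.single ⟨0, hn⟩ (1 : ℚ), by
      intro h
      have := congrFun h ⟨0, hn⟩
      simp at this⟩
  set b := Pi.basisFun ℚ (Fin n) with hb
  refine ⟨fun i => f (b i), ?_, ?_⟩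
  · exact (b.linearIndependent).map' f (LinearMap.ker_eq_bot.mpr hinj)
  · intro x y
    have hsum : ∀ z : Fin n → ℚ, ∑ i, (z i : ℝ) * f (b i) = f z := by
      intro z
      have hz : z = ∑ i, z i • b i := by
        conv_lhs => rw [← b.sum_repr z]
        simp [hb, Pi.basisFun_repr]
      calc ∑ i, (z i : ℝ) * f (b i) = ∑ i, z i • f (b i) := by
            simp [Rat.smul_def]
        _ = f (∑ i, z i • b i) := by rw [map_sum]; simp [map_smul]
        _ = f z := by rw [← hz]
    simp only []
    rw [hsum x, hsum y]
    exact hf x y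
end
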